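/- arXiv:1210.3146 — 5 statements merged into one kernel-verified Lean document; each statement's English description precedes it below -/
import Mathlib

section
/- Let w be an infinite word whose privileged complexity satisfies A_n(w) = 1 for all even n ≥ 0 and A_n(w) = 2 for all odd n ≥ 1. Then w is aperiodic. -/
/-- Number of occurrences of `u` as a factor of `w` (positions are 0-indexed). -/
noncomputable def occCount {A : Type*} (u w : List A) : ℕ :=
  Set.ncard {i : ℕ | i + u.length ≤ w.length ∧ (w.drop i).take u.length = u}

/-- `v` is a complete first return to `u`: `u` is a prefix and a suffix of `v`,
and `u` has exactly two occurrences in `v`. -/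
def IsCompleteFirstReturn {A : Type*} (v u : List A) : Prop :=
  u <+: v ∧ u <:+ v ∧ occCount u v = 2

/-- Privileged words: the empty word and the single letters are privileged, and a word of
length at least 2 is privileged if it is a complete first return to a shorter privileged word. -/
inductive Privileged {A : Type*} : List A → Prop where
  | nil : Privileged ([] : List A)
  | single (a : A) : Privileged [a]
  | ret (w u : List A) : 2 ≤ w.length → u.length < w.length → Privileged u →
      IsCompleteFirstReturn w u → Privileged w

/-- A complete return word: a complete first return to some word
(the empty word counted by convention; letters are complete first returns to the empty word). -/
def IsCompleteReturnWord {A : Type*} (v : List A) : Prop :=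
  v = [] ∨ ∃ u : List A, IsCompleteFirstReturn v u

/-- Position `i` of `w` (1-based, `1 ≤ i ≤ |w|`) introduces the factor `u`:
`u` occurs in `w` ending at position `i` and `u` occurs exactly once in the prefix `w[1,i]`. -/
def Introduces {A : Type*} (w : List A) (i : ℕ) (u : List A) : Prop :=
  1 ≤ i ∧ i ≤ w.length ∧ u <:+ w.take i ∧ occCount u (w.take i) = 1

/-- A finite word is rich if it has exactly `|w| + 1` distinct palindromic factors. -/
noncomputable def RichWord {A : Type*} (w : List A) : Prop :=
  Set.ncard {u : List A | u <:+: w ∧ u.reverse = u} = w.length + 1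

/-- `u` is a (finite) factor of the infinite word `w`. -/
def IsFactorInf {A : Type*} (w : ℕ → A) (u : List A) : Prop :=
  ∃ i : ℕ, u = (List.range u.length).map fun k => w (i + k)

/-- A Q-property of finite words. -/
structure IsQProperty {A : Type*} (Q : List A → Prop) : Prop where
  q_nil : Q []
  q_single : ∀ a : A, Q [a]
  ends_at_every_position : ∀ (w : List A) (i : ℕ), 1 ≤ i → i ≤ w.length →
    ∃ u : List A, u ≠ [] ∧ u <:+ w.take i ∧ Q u
  introduces_at_most_one : ∀ (w : List A) (i : ℕ) (u v : List A),
    Introduces w i u → Introduces w i v → Q u → Q v → u = v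

/-- Q-complexity of an infinite word: the number of distinct factors of length `n`
having property `Q`. -/
noncomputable def qComplexityInf {A : Type*} (w : ℕ → A) (Q : List A → Prop) (n : ℕ) : ℕ :=
  Set.ncard {u : List A | IsFactorInf w u ∧ Q u ∧ u.length = n}

/-- Privileged complexity of an infinite word. -/
noncomputable def privComplexityInf {A : Type*} (w : ℕ → A) (n : ℕ) : ℕ :=
  Set.ncard {u : List A | IsFactorInf w u ∧ Privileged u ∧ u.length = n}

/-- Palindromic complexity of an infinite word. -/
noncomputable def palComplexityInf {A : Type*} (w : ℕ → A) (n : ℕ) : ℕ :=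
  Set.ncard {u : List A | IsFactorInf w u ∧ u.reverse = u ∧ u.length = n}

/-- An infinite word is ultimately periodic if it is of the form `u v v v ⋯`
with `v` nonempty. -/
def UltimatelyPeriodic {A : Type*} (w : ℕ → A) : Prop :=
  ∃ u v : List A, v ≠ [] ∧ ∀ n : ℕ, w n =
    if n < u.length then u.getD n (w 0)
    else v.getD ((n - u.length) % v.length) (w 0)

/-- An infinite word is Sturmian if it has exactly `n + 1` distinct factors of
length `n` for every `n`. -/
def Sturmian {A : Type*} (w : ℕ → A) : Prop :=
  ∀ n : ℕ, Set.ncard {u : List A | IsFactorInf w u ∧ u.length = n} = n + 1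

/-- A finite binary word is balanced: its set of factors is balanced. -/
def BalancedWord (x : List Bool) : Prop :=
  ∀ u v : List Bool, u <:+: x → v <:+: x → u.length = v.length →
    ((u.count true : ℤ) - (v.count true : ℤ)).natAbs ≤ 1

/-- `u` is a right special factor of the infinite word `w`. -/
def RightSpecial {A : Type*} (w : ℕ → A) (u : List A) : Prop :=
  ∃ a b : A, a ≠ b ∧ IsFactorInf w (u ++ [a]) ∧ IsFactorInf w (u ++ [b])

/-- The Thue-Morse word: the `n`-th letter is the parity of the number of ones in the
binary expansion of `n` (`false` = 0, `true` = 1). -/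
def thueMorse (n : ℕ) : Bool := (Nat.digits 2 n).count 1 % 2 == 1

section Aux
variable {A : Type*}

def IsOcc (u w : List A) (i : ℕ) : Prop :=
  i + u.length ≤ w.length ∧ (w.drop i).take u.length = u

lemma occCount_eq (u w : List A) : occCount u w = Set.ncard {i : ℕ | IsOcc u w i} := rfl

lemma isOcc_of_prefix {u v : List A} (h : u <+: v) : IsOcc u v 0 := by
  refine ⟨by simpa using h.length_le, ?_⟩
  simpa using (List.prefix_iff_eq_take.mp h).symm

lemma suffix_drop_eq {u x : List A} (h : u <:+ x) : x.drop (x.length - u.length) = u := by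
  obtain ⟨s, rfl⟩ := h
  have : (s ++ u).length - u.length = s.length := by simp
  rw [this, List.drop_left]

lemma isOcc_of_suffix {u v : List A} (h : u <:+ v) : IsOcc u v (v.length - u.length) := by
  have hl := h.length_le
  refine ⟨by omega, ?_⟩
  rw [suffix_drop_eq h, List.take_length]

lemma suffix_of_suffix_le {u v x : List A} (hu : u <:+ x) (hv : v <:+ x)
    (h : u.length ≤ v.length) : u <:+ v := by
  have h1 : v.drop (v.length - u.length) = u := by
    have := suffix_drop_eq hv
    calc v.drop (v.length - u.length)
        = (x.drop (x.length - v.length)).drop (v.length - u.length) := by rw [this]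
      _ = x.drop ((x.length - v.length) + (v.length - u.length)) := by
          rw [List.drop_drop]
      _ = x.drop (x.length - u.length) := by
          congr 1; have := hv.length_le; omega
      _ = u := suffix_drop_eq hu
  exact h1 ▸ List.drop_suffix _ _

lemma suffix_eq_of_length {u v x : List A} (hu : u <:+ x) (hv : v <:+ x)
    (h : u.length = v.length) : u = v := by
  rw [← suffix_drop_eq hu, ← suffix_drop_eq hv, h]

lemma take_of_isOcc {u x : List A} {i : ℕ} (h : IsOcc u x i) : u <:+ x.take (i + u.length) := by
  rw [List.take_add]
  exact ⟨x.take i, by rw [h.2]⟩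

lemma isOcc_trans {u v x : List A} {i j : ℕ} (h1 : IsOcc u v j) (h2 : IsOcc v x i) :
    IsOcc u x (i + j) := by
  obtain ⟨hb1, he1⟩ := h1
  obtain ⟨hb2, he2⟩ := h2
  refine ⟨by omega, ?_⟩
  have hdd : x.drop (i + j) = (x.drop i).drop j := by rw [List.drop_drop]
  rw [hdd]
  have hy : ((x.drop i).take v.length).drop j = ((x.drop i).drop j).take (v.length - j) := by
    rw [List.drop_take]
  rw [he2] at hy
  have : (v.drop j).take u.length = (((x.drop i).drop j).take (v.length - j)).take u.length := by
    rw [← hy]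
  rw [List.take_take] at this
  have hmin : min u.length (v.length - j) = u.length := by omega
  rw [hmin] at this
  rw [← this, he1]

end Aux

section Core
variable {A : Type*}

lemma ret_ne_nil {v b : List A} (h2 : 2 ≤ v.length) (h : occCount b v = 2) : b ≠ [] := by
  rintro rfl
  rw [occCount_eq] at h
  obtain ⟨a, c, hac, hset⟩ := Set.ncard_eq_two.mp h
  have h0 : (0 : ℕ) ∈ {i : ℕ | IsOcc ([] : List A) v i} := ⟨by simp, by simp⟩
  have h1 : (1 : ℕ) ∈ {i : ℕ | IsOcc ([] : List A) v i} := ⟨by simpa using by omega, by simp⟩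
  have h2' : (2 : ℕ) ∈ {i : ℕ | IsOcc ([] : List A) v i} := ⟨by simpa using h2, by simp⟩
  rw [hset] at h0 h1 h2'
  simp only [Set.mem_insert_iff, Set.mem_singleton_iff] at h0 h1 h2'
  omega

lemma occ_mem_pair {u v : List A} (h : occCount u v = 2) (hp : u <+: v) (hs : u <:+ v)
    (hlt : u.length < v.length) :
    ∀ i, IsOcc u v i → i = 0 ∨ i = v.length - u.length := by
  rw [occCount_eq] at h
  obtain ⟨a, c, hac, hset⟩ := Set.ncard_eq_two.mp h
  have h0 : (0 : ℕ) ∈ {i : ℕ | IsOcc u v i} := isOcc_of_prefix hp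
  have hq : (v.length - u.length) ∈ {i : ℕ | IsOcc u v i} := isOcc_of_suffix hs
  rw [hset] at h0 hq
  intro i hi
  have : i ∈ ({a, c} : Set ℕ) := hset ▸ hi
  simp only [Set.mem_insert_iff, Set.mem_singleton_iff] at h0 hq this
  omega

lemma priv_suffix_two_occ :
    ∀ n : ℕ, ∀ v u : List A, v.length ≤ n → Privileged v → Privileged u → u ≠ [] →
      u.length < v.length → u <:+ v →
      ∃ i j, i ≠ j ∧ IsOcc u v i ∧ IsOcc u v j := by
  intro n
  induction n with
  | zero => intro v u hvn _ _ _ hlt _; omega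
  | succ n ih =>
    intro v u hvn hv hu hune hlt hsuf
    have hulen : 1 ≤ u.length := List.length_pos_iff.mpr hune
    cases hv with
    | nil => simp at hlt
    | single a => rw [List.length_singleton] at hlt; omega
    | ret v b hv2 hblt hbpriv hret =>
      obtain ⟨hbp, hbs, hocc⟩ := hret
      have hbne : b ≠ [] := ret_ne_nil hv2 hocc
      have hblen : 1 ≤ b.length := List.length_pos_iff.mpr hbne
      rcases lt_trichotomy u.length b.length with hcase | hcase | hcase
      · -- u shorter than b : use IH inside b
        have husb : u <:+ b := suffix_of_suffix_le hsuf hbs (le_of_lt hcase)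
        obtain ⟨i, j, hij, hi, hj⟩ := ih b u (by omega) hbpriv hu hune hcase husb
        refine ⟨0 + i, 0 + j, by omega, ?_, ?_⟩
        · exact isOcc_trans hi (isOcc_of_prefix hbp)
        · exact isOcc_trans hj (isOcc_of_prefix hbp)
      · -- u = b
        have : u = b := suffix_eq_of_length hsuf hbs hcase
        subst this
        exact ⟨0, v.length - u.length, by omega, isOcc_of_prefix hbp, isOcc_of_suffix hbs⟩
      · -- u longer than b : impossible
        exfalso
        have hbmem := occ_mem_pair hocc hbp hbs hblt
        have hu2 : 2 ≤ u.length := by omega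
        cases hu with
        | nil => exact hune rfl
        | single a => simp at hu2
        | ret u c hu2' hclt hcpriv hcret =>
          obtain ⟨hcp, hcs, hcocc⟩ := hcret
          have hcne : c ≠ [] := ret_ne_nil hu2' hcocc
          have hclen : 1 ≤ c.length := List.length_pos_iff.mpr hcne
          have hcmem := occ_mem_pair hcocc hcp hcs hclt
          rcases le_or_gt b.length c.length with hbc | hbc
          · -- b is a suffix of c; find a bad occurrence of b in v
            have hcv : c <:+ v := hcs.trans hsuf
            have hbsc : b <:+ c := suffix_of_suffix_le hbs hcv hbc
            have hocc1 : IsOcc c v ((v.length - u.length) + 0) :=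
              isOcc_trans (isOcc_of_prefix hcp) (isOcc_of_suffix hsuf)
            have hocc2 : IsOcc b v (((v.length - u.length) + 0) + (c.length - b.length)) :=
              isOcc_trans (isOcc_of_suffix hbsc) hocc1
            have := hbmem _ hocc2
            omega
          · -- c is a proper suffix of b : IH gives two occurrences of c in b
            have hcv : c <:+ v := hcs.trans hsuf
            have hcsb : c <:+ b := suffix_of_suffix_le hcv hbs (le_of_lt hbc)
            obtain ⟨i, j, hij, hic, hjc⟩ := ih b c (by omega) hbpriv hcpriv hcne hbc hcsb
            have hbu : b <:+ u := suffix_of_suffix_le hbs hsuf (le_of_lt hcase)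
            have h1 : IsOcc c u ((u.length - b.length) + i) :=
              isOcc_trans hic (isOcc_of_suffix hbu)
            have h2 : IsOcc c u ((u.length - b.length) + j) :=
              isOcc_trans hjc (isOcc_of_suffix hbu)
            have e1 := hcmem _ h1
            have e2 := hcmem _ h2
            omega

lemma unique_priv_intro {x u v : List A} (hupriv : Privileged u) (hvpriv : Privileged v)
    (hune : u ≠ []) (hvne : v ≠ []) (hus : u <:+ x) (hvs : v <:+ x)
    (hu1 : ∀ i, IsOcc u x i → i = x.length - u.length)
    (hv1 : ∀ i, IsOcc v x i → i = x.length - v.length) : u = v := by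
  wlog h : u.length ≤ v.length with H
  · exact (H hvpriv hupriv hvne hune hvs hus hv1 hu1 (le_of_not_ge h)).symm
  rcases eq_or_lt_of_le h with heq | hlt
  · exact suffix_eq_of_length hus hvs heq
  exfalso
  have husv : u <:+ v := suffix_of_suffix_le hus hvs h
  obtain ⟨i, j, hij, hi, hj⟩ :=
    priv_suffix_two_occ v.length v u le_rfl hvpriv hupriv hune hlt husv
  have o1 := hu1 _ (isOcc_trans hi (isOcc_of_suffix hvs))
  have o2 := hu1 _ (isOcc_trans hj (isOcc_of_suffix hvs))
  omega

end Core







section Main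
variable {A : Type*}

/-- The prefix of length `j` of the infinite word `w`. -/
def prefWord (w : ℕ → A) (j : ℕ) : List A := (List.range j).map w

lemma prefWord_length (w : ℕ → A) (j : ℕ) : (prefWord w j).length = j := by
  simp [prefWord]

lemma prefWord_take (w : ℕ → A) {m j : ℕ} (h : m ≤ j) :
    (prefWord w j).take m = prefWord w m := by
  simp only [prefWord, ← List.map_take, List.take_range, Nat.min_eq_left h]

lemma prefWord_append (w : ℕ → A) (i n : ℕ) :
    prefWord w (i + n) = prefWord w i ++ (List.range n).map (fun k => w (i + k)) := by
  simp only [prefWord, List.range_add, List.map_append, List.map_map]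
  rfl

lemma factorAt_suffix_prefWord (w : ℕ → A) (u : List A) (i : ℕ)
    (hu : u = (List.range u.length).map fun k => w (i + k)) :
    u <:+ prefWord w (i + u.length) := by
  refine ⟨prefWord w i, ?_⟩
  rw [prefWord_append, ← hu]

lemma suffix_prefWord_isOcc {w : ℕ → A} {u : List A} {j i : ℕ}
    (hocc : IsOcc u (prefWord w j) i) : u <:+ prefWord w (i + u.length) := by
  have h1 := take_of_isOcc hocc
  have h2 : i + u.length ≤ j := by have := hocc.1; rwa [prefWord_length] at this
  rwa [prefWord_take w h2] at h1

lemma sum_pattern (K : ℕ) :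
    (∑ n ∈ Finset.Icc 1 (2 * K), (if Even n then 1 else 2)) = 3 * K := by
  induction K with
  | zero => simp
  | succ K ih =>
    have e1 : 2 * (K + 1) = (2 * K + 1) + 1 := by ring
    rw [e1, Finset.sum_Icc_succ_top (by omega), Finset.sum_Icc_succ_top (by omega), ih]
    have hodd : ¬ Even (2 * K + 1) := by rw [Nat.even_iff]; omega
    have heven : Even (2 * K + 1 + 1) := by rw [Nat.even_iff]; omega
    rw [if_neg hodd, if_pos heven]
    ring

theorem jsp_implies_aperiodic' (w : ℕ → A)
    (h : ∀ n : ℕ, privComplexityInf w n = if Even n then 1 else 2) :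
    ¬ UltimatelyPeriodic w := by
  classical
  rintro ⟨z, t, htne, hw⟩
  -- reduce to abstract eventual periodicity
  suffices main : ∀ N p : ℕ, 1 ≤ p → (∀ m, N ≤ m → w (m + p) = w m) → False by
    refine main z.length t.length (List.length_pos_iff.mpr htne) ?_
    intro m hm
    have h1 := hw m
    have h2 := hw (m + t.length)
    rw [if_neg (by omega)] at h1
    rw [if_neg (by omega)] at h2
    rw [h1, h2]
    congr 1
    have e : m + t.length - z.length = (m - z.length) + t.length := by omega
    rw [e, Nat.add_mod_right]
  intro N p hp hper
  have hper' : ∀ m k, N ≤ m → w (m + k * p) = w m := by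
    intro m k hm
    induction k with
    | zero => simp
    | succ k ih =>
      have e : m + (k + 1) * p = (m + k * p) + p := by ring
      rw [e, hper _ (by omega), ih]
  -- every factor occurs at some position < N + p
  have hoccsmall : ∀ u : List A, IsFactorInf w u →
      ∃ i < N + p, u = (List.range u.length).map fun k => w (i + k) := by
    rintro u ⟨i, hi⟩
    by_cases hcase : i < N + p
    · exact ⟨i, hcase, hi⟩
    · have hiN : N ≤ i := by omega
      have hmod : (i - N) % p < p := Nat.mod_lt _ (by omega)
      refine ⟨N + (i - N) % p, by omega, ?_⟩
      have hkey : ∀ k, w (i + k) = w (N + (i - N) % p + k) := by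
        intro k
        have hik : i + k = (N + (i - N) % p + k) + ((i - N) / p) * p := by
          have h1 := Nat.mod_add_div (i - N) p
          have h2 : (i - N) / p * p = p * ((i - N) / p) := Nat.mul_comm _ _
          omega
        rw [hik, hper' _ _ (by omega)]
      rw [hi]
      simp only [List.length_map, List.length_range]
      apply List.map_congr_left
      intro k _
      exact hkey k
  -- finiteness of the level sets
  have hfin : ∀ n : ℕ, {u : List A | IsFactorInf w u ∧ Privileged u ∧ u.length = n}.Finite := by
    intro n
    by_contra hinf
    have hzero := Set.Infinite.ncard (hinf : ¬ _)
    rw [show ({u : List A | IsFactorInf w u ∧ Privileged u ∧ u.length = n}).ncard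
        = privComplexityInf w n from rfl, h n] at hzero
    split at hzero <;> omega
  set K := N + p with hK
  set M := 2 * K with hM
  -- the finsets of privileged factors of each length
  let Q : ℕ → Finset (List A) := fun n => (hfin n).toFinset
  have hQcard : ∀ n, (Q n).card = privComplexityInf w n := by
    intro n
    rw [privComplexityInf, ← Set.ncard_coe_finset]
    congr 1
    simp [Q]
  let T : Finset (List A) := (Finset.Icc 1 M).biUnion Q
  have hTcard : T.card = 3 * K := by
    rw [show T = (Finset.Icc 1 M).biUnion Q from rfl, Finset.card_biUnion]
    · rw [← sum_pattern K, ← hM]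
      apply Finset.sum_congr rfl
      intro n _
      rw [hQcard n, h n]
    · intro a _ b _ hab
      rw [Function.onFun, Finset.disjoint_left]
      intro u hua hub
      have h1 : u.length = a := ((hfin a).mem_toFinset.mp hua).2.2
      have h2 : u.length = b := ((hfin b).mem_toFinset.mp hub).2.2
      exact hab (h1 ▸ h2)
  -- membership facts for elements of T
  have hTmem : ∀ u ∈ T, IsFactorInf w u ∧ Privileged u ∧ 1 ≤ u.length ∧ u.length ≤ M := by
    intro u hu
    obtain ⟨n, hn, hun⟩ := Finset.mem_biUnion.mp hu
    obtain ⟨hf, hpr, hlen⟩ := (hfin n).mem_toFinset.mp hun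
    rw [Finset.mem_Icc] at hn
    exact ⟨hf, hpr, by omega, by omega⟩
  -- the first-ending-position function
  let E : List A → ℕ := fun u => sInf {j | u <:+ prefWord w j}
  have hEspec : ∀ u ∈ T, u <:+ prefWord w (E u) := by
    intro u hu
    obtain ⟨i, _, hi⟩ := hoccsmall u (hTmem u hu).1
    have hne : {j | u <:+ prefWord w j}.Nonempty :=
      ⟨i + u.length, factorAt_suffix_prefWord w u i hi⟩
    exact Nat.sInf_mem hne
  have hEle : ∀ u (j : ℕ), u <:+ prefWord w j → E u ≤ j := fun u j hj => Nat.sInf_le hj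
  -- E maps T into Icc 1 (3K - 1)
  have hEmaps : ∀ u ∈ T, E u ∈ Finset.Icc 1 (3 * K - 1) := by
    intro u hu
    obtain ⟨_, _, hul, huM⟩ := hTmem u hu
    obtain ⟨i, hiK, hi⟩ := hoccsmall u (hTmem u hu).1
    have h1 : E u ≤ i + u.length := hEle u _ (factorAt_suffix_prefWord w u i hi)
    have h2 : u.length ≤ E u := by
      have := (hEspec u hu).length_le
      rwa [prefWord_length] at this
    rw [Finset.mem_Icc]
    omega
  -- E is injective on T
  have hEinj : Set.InjOn E T := by
    intro u hu v hv huv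
    have hus : u <:+ prefWord w (E u) := hEspec u hu
    have hvs : v <:+ prefWord w (E u) := by rw [huv]; exact hEspec v hv
    have hkey : ∀ (y : List A), y <:+ prefWord w (E u) → E y = E u →
        ∀ i, IsOcc y (prefWord w (E u)) i → i = (prefWord w (E u)).length - y.length := by
      intro y _ hEy i hocc
      have h1 : E y ≤ i + y.length := hEle y _ (suffix_prefWord_isOcc hocc)
      have h2 : i + y.length ≤ E u := by
        have := hocc.1; rwa [prefWord_length] at this
      rw [prefWord_length]
      omega
    exact unique_priv_intro (hTmem u hu).2.1 (hTmem v hv).2.1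
      (List.ne_nil_of_length_pos (hTmem u hu).2.2.1)
      (List.ne_nil_of_length_pos (hTmem v hv).2.2.1)
      hus hvs (hkey u hus rfl) (hkey v hvs huv.symm)
  have hcardle : T.card ≤ (Finset.Icc 1 (3 * K - 1)).card :=
    Finset.card_le_card_of_injOn E hEmaps hEinj
  rw [hTcard, Nat.card_Icc] at hcardle
  omega

end Main


/-- An infinite word whose privileged complexity is 1 for even lengths and
2 for odd lengths is aperiodic. -/
theorem jsp_implies_aperiodic {A : Type*} [Fintype A] (w : ℕ → A)
    (h : ∀ n : ℕ, privComplexityInf w n = if Even n then 1 else 2) :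
    ¬ UltimatelyPeriodic w :=
  jsp_implies_aperiodic' w h
end

section
/- Let w be an infinite word whose palindromic complexity satisfies P_n(w) = 1 for all even n ≥ 0 and P_n(w) = 2 for all odd n ≥ 1. Then w is aperiodic. -/
section AuxPalAperiodic
open List

private lemma aux_pal_factors_finite {A : Type*} (z : List A) :
    {p : List A | p <:+: z ∧ p.reverse = p}.Finite := by
  apply Set.Finite.subset (List.finite_toSet z.sublists)
  intro p hp
  simpa [List.mem_sublists] using hp.1.sublist

private lemma aux_infix_concat_cases {A : Type*} {p t : List A} {a : A} (h : p <:+: t ++ [a]) :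
    p <:+: t ∨ p <:+ t ++ [a] := by
  obtain ⟨s, r, he⟩ := h
  rcases r.eq_nil_or_concat with rfl | ⟨r', b, rfl⟩
  · right; exact ⟨s, by simpa using he⟩
  · left
    have h2 : (s ++ p ++ r') ++ [b] = t ++ [a] := by
      simpa [List.append_assoc] using he
    exact ⟨s, r', (List.append_inj' h2 rfl).1⟩

private lemma aux_pal_count_le {A : Type*} (z : List A) :
    Set.ncard {p : List A | p <:+: z ∧ p.reverse = p} ≤ z.length + 1 := by
  induction z using List.reverseRecOn with
  | nil =>
      have h1 : {p : List A | p <:+: ([] : List A) ∧ p.reverse = p} = {([] : List A)} := by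
        ext p
        simp only [Set.mem_setOf_eq, Set.mem_singleton_iff]
        constructor
        · rintro ⟨hp, -⟩
          have := hp.sublist
          simpa using this
        · rintro rfl; simp
      rw [h1]; simp
  | append_singleton t a ih =>
      set z' := t ++ [a] with hz'
      have hPSfin : {p : List A | p <:+ z' ∧ p.reverse = p}.Finite :=
        (aux_pal_factors_finite z').subset (fun p hp => ⟨hp.1.isInfix, hp.2⟩)
      have hPSne : {p : List A | p <:+ z' ∧ p.reverse = p}.Nonempty :=
        ⟨[a], List.suffix_append _ _, by simp⟩
      obtain ⟨L, hLmem, hLmax⟩ := hPSfin.exists_maximalFor List.length _ hPSne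
      have hmax : ∀ p ∈ {p : List A | p <:+ z' ∧ p.reverse = p}, p.length ≤ L.length := by
        intro p hp
        rcases le_total p.length L.length with h | h
        · exact h
        · exact hLmax hp h
      have hsub : {p : List A | p <:+: z' ∧ p.reverse = p} ⊆
          {p : List A | p <:+: t ∧ p.reverse = p} ∪ {L} := by
        intro p hp
        obtain ⟨hpi, hppal⟩ := hp
        rcases aux_infix_concat_cases hpi with hcase | hcase
        · exact Or.inl ⟨hcase, hppal⟩
        · by_cases hpl : p = L
          · exact Or.inr (by simp [hpl])
          left
          have hple : p.length ≤ L.length := hmax p ⟨hcase, hppal⟩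
          have hpsL : p <:+ L := List.suffix_of_suffix_length_le hcase hLmem.1 hple
          have hppL : p <+: L := by
            rw [← List.reverse_suffix]; rwa [hppal, hLmem.2]
          obtain ⟨r, hr⟩ := hppL
          obtain ⟨c, hc⟩ := hLmem.1
          have hrne : r ≠ [] := by
            intro hnil; apply hpl; simpa [hnil] using hr
          obtain ⟨r', b, rfl⟩ := r.eq_nil_or_concat.resolve_left hrne
          have h2 : (c ++ p ++ r') ++ [b] = t ++ [a] := by
            rw [← hr] at hc
            simpa [List.append_assoc] using hc
          exact ⟨⟨c, r', (List.append_inj' h2 rfl).1⟩, hppal⟩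
      calc Set.ncard {p : List A | p <:+: z' ∧ p.reverse = p}
          ≤ Set.ncard ({p : List A | p <:+: t ∧ p.reverse = p} ∪ {L}) :=
            Set.ncard_le_ncard hsub ((aux_pal_factors_finite t).union (Set.finite_singleton L))
        _ ≤ Set.ncard {p : List A | p <:+: t ∧ p.reverse = p} + 1 := by
            simpa using Set.ncard_union_le {p : List A | p <:+: t ∧ p.reverse = p} {L}
        _ ≤ z'.length + 1 := by simp [hz']; omega

private lemma aux_window_infix {A : Type*} (w : ℕ → A) (i n M : ℕ) (h : i + n ≤ M) :
    ((List.range n).map fun k => w (i + k)) <:+: (List.range M).map w := by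
  have hM : M = i + n + (M - (i + n)) := by omega
  rw [hM, List.range_add, List.range_add]
  refine ⟨(List.range i).map w, ((List.range (M - (i+n))).map fun x => i + n + x).map w, ?_⟩
  simp [List.map_map, Function.comp, List.append_assoc]

private lemma aux_sum_pattern (M : ℕ) :
    (∑ n ∈ Finset.range (2 * M + 1), (if Even n then 1 else 2)) = 3 * M + 1 := by
  induction M with
  | zero => simp
  | succ m ih =>
      have h : 2 * (m + 1) + 1 = (2 * m + 1) + 1 + 1 := by ring
      rw [h, Finset.sum_range_succ, Finset.sum_range_succ, ih]
      have h1 : ¬ Even (2 * m + 1) := by simp [Nat.even_add_one, parity_simps]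
      have h2 : Even (2 * m + 1 + 1) := by
        have : 2 * m + 1 + 1 = 2 * (m + 1) := by ring
        rw [this]; exact even_two_mul _
      rw [if_neg h1, if_pos h2]
      ring

end AuxPalAperiodic

/-- An infinite word whose palindromic complexity is 1 for even lengths and
2 for odd lengths is aperiodic. -/
theorem pal_complexity_implies_aperiodic {A : Type*} [Fintype A] (w : ℕ → A)
    (h : ∀ n : ℕ, palComplexityInf w n = if Even n then 1 else 2) :
    ¬ UltimatelyPeriodic w := by
  classical
  intro hup
  obtain ⟨u0, v0, hv0, hspec⟩ := hup
  set s := u0.length with hs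
  set q := v0.length with hq
  have hq1 : 1 ≤ q := List.length_pos_iff.mpr hv0
  -- eventual periodicity
  have hper : ∀ m, s ≤ m → w (m + q) = w m := by
    intro m hm
    have h1 := hspec m
    have h2 := hspec (m + q)
    rw [if_neg (by omega)] at h1
    rw [if_neg (by omega)] at h2
    have hmod : (m + q - s) % q = (m - s) % q := by
      have : m + q - s = (m - s) + q := by omega
      rw [this, Nat.add_mod_right]
    rw [h1, h2, hmod]
  -- every window occurs at a position < s + q
  have hshift : ∀ i, ∃ j, j < s + q ∧ ∀ k, w (j + k) = w (i + k) := by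
    intro i
    induction i using Nat.strong_induction_on with
    | _ i ih =>
      by_cases hi : i < s + q
      · exact ⟨i, hi, fun k => rfl⟩
      · push_neg at hi
        obtain ⟨j, hj, hjk⟩ := ih (i - q) (by omega)
        refine ⟨j, hj, fun k => ?_⟩
        rw [hjk k]
        have : i + k = (i - q + k) + q := by omega
        rw [this, hper (i - q + k) (by omega)]
  -- a factor of length ≤ N is an infix of the prefix of length s + q + N
  have hfac : ∀ (N : ℕ) (p : List A), IsFactorInf w p → p.length ≤ N →
      p <:+: (List.range (s + q + N)).map w := by
    intro N p hp hlen
    obtain ⟨i, hi⟩ := hp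
    obtain ⟨j, hj, hjk⟩ := hshift i
    have hpj : p = (List.range p.length).map fun k => w (j + k) := by
      conv_lhs => rw [hi]
      exact (List.map_congr_left (fun k _ => hjk k)).symm
    nth_rewrite 1 [hpj]
    exact aux_window_infix w j p.length (s + q + N) (by omega)
  -- counting palindromic factors of bounded length
  set M := s + q + 1 with hM
  set N := 2 * M with hN
  set P := (List.range (s + q + N)).map w with hP
  set Pal : Set (List A) := {p : List A | p <:+: P ∧ p.reverse = p} with hPal
  have hPalfin : Pal.Finite := aux_pal_factors_finite P
  set S : ℕ → Set (List A) :=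
    fun n => {u : List A | IsFactorInf w u ∧ u.reverse = u ∧ u.length = n} with hS
  have hSsub : ∀ n, n ≤ N → S n ⊆ Pal := by
    intro n hn p hp
    have hl : p.length ≤ N := hp.2.2 ▸ hn
    exact ⟨hfac N p hp.1 hl, hp.2.1⟩
  have hSfin : ∀ n, n ∈ Finset.range (N + 1) → (S n).Finite := by
    intro n hn
    exact hPalfin.subset (hSsub n (by simpa [Nat.lt_succ_iff] using hn))
  set T : ℕ → Finset (List A) := fun n =>
    if hn : n ∈ Finset.range (N + 1) then (hSfin n hn).toFinset else ∅ with hT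
  have hTcard : ∀ n ∈ Finset.range (N + 1), (T n).card = (if Even n then 1 else 2) := by
    intro n hn
    have : (T n).card = (S n).ncard := by
      rw [hT]; simp only [dif_pos hn]
      exact (Set.ncard_eq_toFinset_card _ _).symm
    rw [this]
    exact h n
  have hTdisj : ∀ x ∈ Finset.range (N + 1), ∀ y ∈ Finset.range (N + 1), x ≠ y →
      Disjoint (T x) (T y) := by
    intro x hx y hy hxy
    rw [Finset.disjoint_left]
    intro p hpx hpy
    rw [hT] at hpx hpy
    simp only [dif_pos hx] at hpx
    simp only [dif_pos hy] at hpy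
    rw [Set.Finite.mem_toFinset] at hpx hpy
    exact hxy (hpx.2.2 ▸ hpy.2.2)
  have hUsub : (Finset.range (N + 1)).biUnion T ⊆ hPalfin.toFinset := by
    intro p hp
    rw [Finset.mem_biUnion] at hp
    obtain ⟨n, hn, hpn⟩ := hp
    rw [hT] at hpn
    simp only [dif_pos hn] at hpn
    rw [Set.Finite.mem_toFinset] at hpn ⊢
    exact hSsub n (by simpa [Nat.lt_succ_iff] using hn) hpn
  have hcard1 : ((Finset.range (N + 1)).biUnion T).card =
      ∑ n ∈ Finset.range (N + 1), (T n).card := Finset.card_biUnion hTdisj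
  have hsum : ∑ n ∈ Finset.range (N + 1), (T n).card = 3 * M + 1 := by
    rw [Finset.sum_congr rfl hTcard]
    have : N + 1 = 2 * M + 1 := by rw [hN]
    rw [this]
    exact aux_sum_pattern M
  have hPalcard : hPalfin.toFinset.card ≤ P.length + 1 := by
    have := aux_pal_count_le P
    rwa [Set.ncard_eq_toFinset_card _ hPalfin] at this
  have hle : 3 * M + 1 ≤ P.length + 1 := by
    rw [← hsum, ← hcard1]
    exact le_trans (Finset.card_le_card hUsub) hPalcard
  have hPlen : P.length = s + q + N := by simp [hP]
  rw [hPlen] at hle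
  omega
end

section
/- Let w be an A-strict episturmian word over a finite alphabet A with |A| ≥ 2. Then the privileged complexity of w satisfies A_n(w) = 1 for all even n ≥ 0 and A_n(w) = |A| for all odd n ≥ 1. -/
namespace PrivEpi

open List

variable {A : Type*}

/-- `x` occurs in `v` at position `i`. -/
def SA (v : List A) (i : ℕ) (x : List A) : Prop :=
  ∃ p s : List A, v = p ++ x ++ s ∧ p.length = i

lemma sa_iff {v x : List A} {i : ℕ} :
    SA v i x ↔ i + x.length ≤ v.length ∧ (v.drop i).take x.length = x := by
  constructor
  · rintro ⟨p, s, rfl, rfl⟩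
    refine ⟨by simp only [List.length_append]; omega, ?_⟩
    rw [List.append_assoc, List.drop_left, List.take_left]
  · rintro ⟨h1, h2⟩
    refine ⟨v.take i, v.drop (i + x.length), ?_, ?_⟩
    · conv_lhs => rw [← List.take_append_drop i v]
      rw [List.append_assoc]
      congr 1
      conv_lhs => rw [← List.take_append_drop x.length (v.drop i)]
      rw [h2, List.drop_drop]
    · simp only [List.length_take]; omega

lemma SA.length_le {v x : List A} {i : ℕ} (h : SA v i x) : i + x.length ≤ v.length :=
  (sa_iff.1 h).1

lemma SA.trans {v x y : List A} {t s : ℕ} (h : SA v t x) (h' : SA x s y) :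
    SA v (t + s) y := by
  obtain ⟨p, q, rfl, rfl⟩ := h
  obtain ⟨p', q', rfl, rfl⟩ := h'
  exact ⟨p ++ p', q' ++ q, by simp, by simp⟩

lemma sa_zero_iff {v x : List A} : SA v 0 x ↔ x <+: v := by
  constructor
  · rintro ⟨p, s, rfl, hp⟩
    rw [List.length_eq_zero_iff] at hp
    subst hp
    exact ⟨s, by simp⟩
  · rintro ⟨s, rfl⟩
    exact ⟨[], s, by simp, rfl⟩

lemma SA.of_prefix {v x y : List A} {t : ℕ} (h : SA v t x) (h' : y <+: x) : SA v t y := by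
  simpa using h.trans (sa_zero_iff.2 h')

lemma SA.of_suffix {v x y : List A} {t : ℕ} (h : SA v t x) (h' : y <:+ x) :
    SA v (t + (x.length - y.length)) y := by
  obtain ⟨s, rfl⟩ := h'
  exact h.trans ⟨s, [], by simp, by simp⟩

lemma sa_suffix {v x : List A} (h : x <:+ v) : SA v (v.length - x.length) x := by
  simpa using (sa_zero_iff.2 (List.prefix_refl v)).of_suffix h

lemma SA.suffix_of {v x : List A} {t : ℕ} (h : SA v t x) (ht : t + x.length = v.length) :
    x <:+ v := by
  obtain ⟨p, s, rfl, rfl⟩ := h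
  have h2 : p.length + x.length + s.length = p.length + x.length := by
    simpa [List.length_append] using ht.symm
  have : s.length = 0 := by omega
  rw [List.length_eq_zero_iff] at this
  subst this
  exact ⟨p, by simp⟩

lemma SA.rev {v x : List A} {t : ℕ} (h : SA v t x) :
    SA v.reverse (v.length - x.length - t) x.reverse := by
  obtain ⟨p, s, rfl, rfl⟩ := h
  refine ⟨s.reverse, p.reverse, by simp, ?_⟩
  simp only [List.length_reverse, List.length_append]
  omega

lemma sa_take {v x : List A} {t L : ℕ} (h : SA v t x) (hL : t + x.length ≤ L) :
    SA (v.take L) t x := by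
  rw [sa_iff] at h ⊢
  obtain ⟨h1, h2⟩ := h
  refine ⟨by simp only [List.length_take]; omega, ?_⟩
  rw [List.drop_take, List.take_take, min_eq_left (by omega), h2]

lemma SA.of_take {v x : List A} {t L : ℕ} (h : SA (v.take L) t x) : SA v t x := by
  simpa using (sa_zero_iff.2 (List.take_prefix L v)).trans h

lemma sa_append_single {z x : List A} {c : A} {t : ℕ} (h : SA (z ++ [c]) t x)
    (hb : t + x.length ≤ z.length) : SA z t x := by
  have := sa_take (L := z.length) h hb
  rwa [List.take_left] at this

lemma sa_both_letters {v x : List A} {t : ℕ} (h : SA v t x) (h1 : 1 ≤ t)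
    (h2 : t + x.length + 1 ≤ v.length) : ∃ e f, SA v (t - 1) ([e] ++ x ++ [f]) := by
  obtain ⟨p, s, rfl, rfl⟩ := h
  have hp : p ≠ [] := by intro hh; subst hh; simp at h1
  have hs : s ≠ [] := by
    intro hh; subst hh
    simp only [List.length_append, List.append_nil] at h2
    omega
  obtain ⟨f, s', rfl⟩ := List.exists_cons_of_ne_nil hs
  rcases List.eq_nil_or_concat p with hcon | ⟨p', e, hcon⟩
  · exact absurd hcon hp
  subst hcon
  refine ⟨e, f, p', s', by simp, by simp⟩

lemma sa_middle {v V x : List A} {a b : A} (hv : v = [a] ++ V ++ [b]) {t : ℕ} :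
    SA V t x ↔ SA v (t + 1) x ∧ t + 1 + x.length + 1 ≤ v.length := by
  constructor
  · rintro ⟨p, s, rfl, rfl⟩
    subst hv
    constructor
    · exact ⟨[a] ++ p, s ++ [b], by simp, by simp⟩
    · simp only [List.length_append, List.length_cons, List.length_nil]; omega
  · rintro ⟨⟨p, s, he, hp⟩, hb⟩
    have hpn : p ≠ [] := by intro hh; subst hh; simp at hp
    have hsn : s ≠ [] := by
      intro hh; subst hh
      rw [he] at hb
      simp only [List.length_append, List.append_nil] at hb
      omega
    obtain ⟨a', p₀, rfl⟩ := List.exists_cons_of_ne_nil hpn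
    rcases List.eq_nil_or_concat s with hcon | ⟨s₀, b', hcon⟩
    · exact absurd hcon hsn
    subst hcon
    rw [hv] at he
    have h2 : a = a' ∧ V ++ [b] = p₀ ++ (x ++ (s₀ ++ [b'])) := by
      simpa using he
    have h3 : V ++ [b] = (p₀ ++ x ++ s₀) ++ [b'] := by
      rw [h2.2]; simp
    have h4 := List.append_inj' h3 (by simp)
    refine ⟨p₀, s₀, h4.1, by simpa using hp⟩

lemma sa_getElem {v : List A} {j : ℕ} (h : j < v.length) : SA v j [v[j]] := by
  refine ⟨v.take j, v.drop (j + 1), ?_, by simp only [List.length_take]; omega⟩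
  conv_lhs => rw [← List.take_append_drop j v]
  rw [List.drop_eq_getElem_cons h]
  simp

/-- the canonical factor of `w` starting at `a` of length `b` -/
def seg (w : ℕ → A) (a b : ℕ) : List A := (List.range b).map fun k => w (a + k)

@[simp] lemma seg_length {w : ℕ → A} {a b : ℕ} : (seg w a b).length = b := by simp [seg]

lemma seg_add {w : ℕ → A} (a b c : ℕ) : seg w a (b + c) = seg w a b ++ seg w (a + b) c := by
  simp only [seg, List.range_add, List.map_append, List.map_map]
  congr 1
  apply List.map_congr_left
  intro k _
  simp [Function.comp, Nat.add_assoc]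

lemma seg_one {w : ℕ → A} (a : ℕ) : seg w a 1 = [w a] := by simp [seg, List.range_succ]

lemma fc_iff_seg {w : ℕ → A} {u : List A} : IsFactorInf w u ↔ ∃ i, u = seg w i u.length :=
  Iff.rfl

lemma fc_seg {w : ℕ → A} (a b : ℕ) : IsFactorInf w (seg w a b) :=
  ⟨a, by simp [seg]⟩

lemma seg_of_sa {w : ℕ → A} {v x : List A} {i t : ℕ} (hv : v = seg w i v.length)
    (h : SA v t x) : x = seg w (i + t) x.length := by
  obtain ⟨p, s, he, hp⟩ := h
  have hlen : v.length = p.length + (x.length + s.length) := by rw [he]; simp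
  rw [hlen, seg_add, seg_add] at hv
  rw [he] at hv
  have h1 := List.append_inj (by simpa using hv) (by simp)
  have h2 := List.append_inj h1.2 (by simp)
  rw [hp] at h2
  exact h2.1

lemma fc_of_sa {w : ℕ → A} {v x : List A} {t : ℕ} (hv : IsFactorInf w v)
    (h : SA v t x) : IsFactorInf w x := by
  obtain ⟨i, hi⟩ := hv
  exact ⟨i + t, seg_of_sa hi h⟩

lemma fc_of_infix {w : ℕ → A} {v x : List A} (hv : IsFactorInf w v)
    (h : x <:+: v) : IsFactorInf w x := by
  obtain ⟨p, s, rfl⟩ := h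
  exact fc_of_sa hv ⟨p, s, rfl, rfl⟩

lemma fc_of_pre {w : ℕ → A} {v x : List A} (hv : IsFactorInf w v)
    (h : x <+: v) : IsFactorInf w x := fc_of_infix hv h.isInfix

lemma fc_of_suf {w : ℕ → A} {v x : List A} (hv : IsFactorInf w v)
    (h : x <:+ v) : IsFactorInf w x := fc_of_infix hv h.isInfix

-- PART 2: occSet / cfr lemmas, right special machinery

variable {A : Type*}

def occSet (u v : List A) : Set ℕ := {i | SA v i u}

lemma occCount_eq_ncard (u v : List A) : occCount u v = (occSet u v).ncard := by
  unfold occCount occSet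
  congr 1
  ext i
  simp only [Set.mem_setOf_eq]
  exact sa_iff.symm

lemma occSet_finite (u v : List A) : (occSet u v).Finite := by
  apply Set.Finite.subset (Set.finite_Iic v.length)
  intro i hi
  have := hi.length_le
  simp only [Set.mem_Iic]
  omega

/-- extracting the occurrence set from a complete first return -/
lemma cfr_occSet {u v : List A} (h : IsCompleteFirstReturn v u) (hlt : u.length < v.length) :
    occSet u v = {0, v.length - u.length} := by
  obtain ⟨hp, hs, hc⟩ := h
  rw [occCount_eq_ncard] at hc
  symm
  apply Set.eq_of_subset_of_ncard_le
  · rintro i (rfl | rfl)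
    · exact sa_zero_iff.2 hp
    · exact sa_suffix hs
  · rw [hc, Set.ncard_pair (by omega)]
  · exact occSet_finite u v

lemma cfr_of_occSet {u v : List A} (he : occSet u v = {0, v.length - u.length})
    (hlt : u.length < v.length) : IsCompleteFirstReturn v u := by
  have h0 : SA v 0 u := by rw [← Set.mem_setOf_eq (p := fun i => SA v i u)]; rw [show {i | SA v i u} = occSet u v from rfl, he]; left; rfl
  have hd : SA v (v.length - u.length) u := by
    have : v.length - u.length ∈ occSet u v := by rw [he]; right; rfl
    exact this
  refine ⟨sa_zero_iff.1 h0, hd.suffix_of (by omega), ?_⟩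
  rw [occCount_eq_ncard, show occSet u v = {0, v.length - u.length} from he]
  exact Set.ncard_pair (by omega)

lemma occSet_nil (v : List A) : occSet ([] : List A) v = Set.Iic v.length := by
  ext i
  constructor
  · intro h; exact h.length_le.trans_eq (by simp) |>.trans_eq rfl
  · intro h
    exact ⟨v.take i, v.drop i, by simp, by simp only [List.length_take]; simpa using h⟩

section W
variable (w : ℕ → A)

/-- the right special factor of length n -/
noncomputable def theRS
    (hstrict : ∀ n : ℕ, ∃ u : List A, u.length = n ∧ RightSpecial w u ∧
      (∀ v : List A, v.length = n → RightSpecial w v → v = u) ∧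
      ∀ a : A, IsFactorInf w (u ++ [a])) (n : ℕ) : List A :=
  (hstrict n).choose

variable (hstrict : ∀ n : ℕ, ∃ u : List A, u.length = n ∧ RightSpecial w u ∧
      (∀ v : List A, v.length = n → RightSpecial w v → v = u) ∧
      ∀ a : A, IsFactorInf w (u ++ [a]))
include hstrict

lemma theRS_length (n : ℕ) : (theRS w hstrict n).length = n :=
  (hstrict n).choose_spec.1

lemma theRS_rs (n : ℕ) : RightSpecial w (theRS w hstrict n) :=
  (hstrict n).choose_spec.2.1

lemma theRS_uniq {v : List A} (hv : RightSpecial w v) : v = theRS w hstrict v.length :=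
  (hstrict v.length).choose_spec.2.2.1 v rfl hv

lemma theRS_ext (n : ℕ) (a : A) : IsFactorInf w (theRS w hstrict n ++ [a]) :=
  (hstrict n).choose_spec.2.2.2 a

lemma theRS_zero : theRS w hstrict 0 = [] :=
  List.length_eq_zero_iff.1 (theRS_length w hstrict 0)

lemma fc_letter (a : A) : IsFactorInf w [a] := by
  have := theRS_ext w hstrict 0 a
  rwa [theRS_zero, List.nil_append] at this

omit hstrict in
/-- suffix of a right special factor is right special -/
lemma rs_suffix {u y : List A} (h : RightSpecial w u) (hy : y <:+ u) : RightSpecial w y := by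
  obtain ⟨a, b, hab, ha, hb⟩ := h
  obtain ⟨s, rfl⟩ := hy
  exact ⟨a, b, hab, fc_of_suf ha ⟨s, by simp⟩, fc_of_suf hb ⟨s, by simp⟩⟩

/-- a suffix of the right special factor is the right special factor of its length -/
lemma theRS_suffix {y : List A} {n : ℕ} (hy : y <:+ theRS w hstrict n) :
    y = theRS w hstrict y.length :=
  theRS_uniq w hstrict (rs_suffix w (theRS_rs w hstrict n) hy)

omit hstrict in
/-- unique right extension of a non-right-special factor -/
lemma unique_ext {x : List A} (hx : ¬ RightSpecial w x) {a b : A}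
    (ha : IsFactorInf w (x ++ [a])) (hb : IsFactorInf w (x ++ [b])) : a = b := by
  by_contra hab
  exact hx ⟨a, b, hab, ha, hb⟩

variable (hrev : ∀ u : List A, IsFactorInf w u → IsFactorInf w u.reverse)
include hrev

omit hstrict in
/-- every factor occurs at a position ≥ 1 -/
lemma occ_pos {u : List A} (hu : IsFactorInf w u) :
    ∃ i, 1 ≤ i ∧ u = seg w i u.length := by
  have key : ∀ x : List A, IsFactorInf w x → ∃ i, 1 ≤ i ∧ x.reverse = seg w i x.reverse.length := by
    intro x hx
    obtain ⟨i₀, hi₀⟩ := fc_iff_seg.1 hx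
    set Q : List A := seg w 0 (i₀ + x.length + 1) with hQ
    have hQl : Q.length = i₀ + x.length + 1 := by simp [hQ]
    have hQs : SA Q i₀ x := by
      refine ⟨seg w 0 i₀, seg w (i₀ + x.length) 1, ?_, by simp⟩
      rw [hQ, show i₀ + x.length + 1 = i₀ + (x.length + 1) from rfl, seg_add, seg_add, hi₀]
      simp
    have hQf : IsFactorInf w Q := fc_seg 0 _
    have hQr : IsFactorInf w Q.reverse := hrev _ hQf
    have hrevsa : SA Q.reverse (Q.length - x.length - i₀) x.reverse := hQs.rev
    obtain ⟨j, hj⟩ := fc_iff_seg.1 hQr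
    have : x.reverse = seg w (j + (Q.length - x.length - i₀)) x.reverse.length :=
      seg_of_sa (by simpa using hj) hrevsa
    exact ⟨j + (Q.length - x.length - i₀), by omega, this⟩
  obtain ⟨i, hi, h⟩ := key u.reverse (hrev u hu)
  rw [List.reverse_reverse] at h
  exact ⟨i, hi, h⟩

omit hstrict in
/-- every factor extends to a two-sided extension -/
lemma two_sided_ext {u : List A} (hu : IsFactorInf w u) :
    ∃ e f, IsFactorInf w ([e] ++ u ++ [f]) := by
  obtain ⟨i, hi, hseg⟩ := occ_pos w hrev hu
  refine ⟨w (i-1), w (i + u.length), ?_⟩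
  have : [w (i-1)] ++ u ++ [w (i + u.length)] = seg w (i-1) (1 + (u.length + 1)) := by
    rw [seg_add, seg_add, seg_one, seg_one, show i - 1 + 1 = i from by omega, ← hseg]
    simp [show i - 1 + 1 = i from by omega]
  rw [this]
  exact fc_seg _ _

/-- KEY: two-sided extensions of a right-special palindrome all touch the letter `c`
    where `c :: p` is the right special factor of the next length. -/
lemma apaRS {p : List A} (hp : p.reverse = p) (hrs : RightSpecial w p) :
    ∃ c, theRS w hstrict (p.length + 1) = c :: p ∧
      ∀ e f, IsFactorInf w ([e] ++ p ++ [f]) → e = c ∨ f = c := by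
  have hRlen : (theRS w hstrict (p.length + 1)).length = p.length + 1 :=
    theRS_length w hstrict _
  have hRne : theRS w hstrict (p.length + 1) ≠ [] := by
    intro h; rw [h] at hRlen; simp at hRlen
  obtain ⟨c, T, hcT⟩ := List.exists_cons_of_ne_nil hRne
  have hT : T = theRS w hstrict T.length := by
    apply theRS_suffix w hstrict (n := p.length + 1)
    rw [hcT]
    exact ⟨[c], rfl⟩
  have hTlen : T.length = p.length := by
    rw [hcT] at hRlen; simpa using hRlen
  have hpT : T = p := by
    rw [hT, hTlen]
    exact (theRS_uniq w hstrict hrs).symm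
  subst hpT
  refine ⟨c, hcT, ?_⟩
  intro e f hef
  by_contra hcon
  push_neg at hcon
  obtain ⟨he, hf⟩ := hcon
  have h1 : IsFactorInf w ((f :: T) ++ [c]) := by
    have h0 := theRS_ext w hstrict (T.length + 1) f
    rw [hcT] at h0
    have h2 := hrev _ h0
    have : ((c :: T) ++ [f]).reverse = (f :: T) ++ [c] := by
      simp [hp]
    rwa [this] at h2
  have h2 : IsFactorInf w ((f :: T) ++ [e]) := by
    have h3 := hrev _ hef
    have : ([e] ++ T ++ [f]).reverse = (f :: T) ++ [e] := by
      simp [hp]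
    rwa [this] at h3
  have hrs2 : RightSpecial w (f :: T) := ⟨c, e, fun hce => he hce.symm, h1, h2⟩
  have h4 := theRS_uniq w hstrict hrs2
  simp only [List.length_cons] at h4
  rw [hcT] at h4
  exact hf (List.head_eq_of_cons_eq h4)

lemma apa_exists {p : List A} (hfc : IsFactorInf w p) (hp : p.reverse = p) :
    ∃ a, IsFactorInf w ([a] ++ p ++ [a]) := by
  by_cases hrs : RightSpecial w p
  · obtain ⟨c, hc, _⟩ := apaRS w hstrict hrev hp hrs
    have h0 := theRS_ext w hstrict (p.length + 1) c
    rw [hc] at h0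
    exact ⟨c, by simpa using h0⟩
  · obtain ⟨e, f, hef⟩ := two_sided_ext w hrev hfc
    have hfe : IsFactorInf w ([f] ++ p ++ [e]) := by
      have h3 := hrev _ hef
      have : ([e] ++ p ++ [f]).reverse = [f] ++ p ++ [e] := by simp [hp]
      rwa [this] at h3
    have h1 : IsFactorInf w (p ++ [f]) := fc_of_suf hef ⟨[e], by simp⟩
    have h2 : IsFactorInf w (p ++ [e]) := fc_of_suf hfe ⟨[f], by simp⟩
    have hfeq : f = e := unique_ext w hrs h1 h2
    subst hfeq
    exact ⟨f, hef⟩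

lemma apa_unique {p : List A} (hp : p.reverse = p) {a b : A}
    (ha : IsFactorInf w ([a] ++ p ++ [a])) (hb : IsFactorInf w ([b] ++ p ++ [b])) :
    a = b := by
  by_cases hrs : RightSpecial w p
  · obtain ⟨c, _, hii⟩ := apaRS w hstrict hrev hp hrs
    rcases hii a a ha with h | h <;> rcases hii b b hb with h' | h' <;>
      exact h.trans h'.symm
  · have ha' : IsFactorInf w (p ++ [a]) := fc_of_suf ha ⟨[a], by simp⟩
    have hb' : IsFactorInf w (p ++ [b]) := fc_of_suf hb ⟨[b], by simp⟩
    exact unique_ext w hrs ha' hb'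

omit hrev in
/-- if `cc` is a factor then `c` is right special -/
lemma rs_of_square [Fintype A] (hA : 2 ≤ Fintype.card A) {c : A}
    (hcc : IsFactorInf w [c, c]) : RightSpecial w [c] := by
  by_contra hrs
  have hext : ∀ x, IsFactorInf w ([c] ++ [x]) → x = c := fun x hx =>
    unique_ext w hrs hx (by simpa using hcc)
  obtain ⟨i, hi⟩ := fc_iff_seg.1 (fc_of_pre hcc (show [c] <+: [c,c] from ⟨[c], rfl⟩))
  have hwi : w i = c := by
    rw [show ([c] : List A).length = 1 from rfl, seg_one] at hi
    exact (List.head_eq_of_cons_eq hi).symm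
  have hall : ∀ k, w (i + k) = c := by
    intro k; induction k with
    | zero => simpa using hwi
    | succ k ih =>
      have h2 : IsFactorInf w [w (i+k), w (i+k+1)] := by
        have he : [w (i+k), w (i+k+1)] = seg w (i+k) 2 := by
          rw [show (2:ℕ) = 1+1 from rfl, seg_add, seg_one, seg_one]
          simp
        rw [he]; exact fc_seg _ _
      rw [ih] at h2
      have h3 := hext _ (by simpa using h2)
      rw [show i + (k+1) = i + k + 1 from by omega]
      exact h3
  obtain ⟨g, hg⟩ := Fintype.exists_ne_of_one_lt_card (by omega) c
  have hfc := theRS_ext w hstrict (i+1) g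
  obtain ⟨j, hj⟩ := fc_iff_seg.1 hfc
  have hlen : (theRS w hstrict (i+1) ++ [g]).length = (i+1) + 1 := by
    simp [theRS_length]
  have hdec : theRS w hstrict (i+1) ++ [g] = seg w j (i+1) ++ [w (j + (i+1))] := by
    rw [hj, hlen, seg_add, seg_one]
  have h2 := (List.append_inj' hdec (by simp)).2
  have hgw : g = w (j + (i+1)) := List.head_eq_of_cons_eq h2
  have h3 : w (j + (i + 1)) = c := by
    have h4 := hall (j + 1)
    rwa [show i + (j+1) = j + (i+1) from by omega] at h4
  exact hg (hgw.trans h3)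
end W

/-- writing a nonempty palindrome as `(dropLast) ++ [c]` with `[c]` also a prefix -/
lemma pal_last {u : List A} (hu : u.reverse = u) (hne : u ≠ []) :
    ∃ c, u = u.dropLast ++ [c] ∧ [c] <+: u := by
  refine ⟨u.getLast hne, (List.dropLast_append_getLast hne).symm, ?_⟩
  have hrev2 : u.reverse = u.getLast hne :: u.dropLast.reverse := by
    conv_lhs => rw [← List.dropLast_append_getLast hne]
    simp
  exact ⟨u.dropLast.reverse, hrev2.symm.trans hu⟩

/-- peeling first and last letters -/
lemma vdecomp {v : List A} {c c' : A} (h2 : 2 ≤ v.length) (hpre : [c] <+: v)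
    (hsuf : [c'] <:+ v) : v = [c] ++ (v.drop 1).dropLast ++ [c'] := by
  obtain ⟨Y, hY⟩ := hpre
  obtain ⟨Z, hZ⟩ := hsuf
  have hZlen : 1 ≤ Z.length := by
    have : v.length = Z.length + 1 := by rw [← hZ]; simp
    omega
  have hdrop : v.drop 1 = Z.drop 1 ++ [c'] := by
    rw [← hZ, List.drop_append, show (1:ℕ) - Z.length = 0 from by omega]
    simp
  have hdl : (v.drop 1).dropLast = Z.drop 1 := by rw [hdrop, List.dropLast_concat]
  have hY1 : Y = v.drop 1 := by rw [← hY]; simp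
  rw [hdl, List.append_assoc, ← hdrop, ← hY1]
  exact hY.symm

/-- decomposition of a palindrome of length ≥ 2 -/
lemma palDecomp {u : List A} (hu : u.reverse = u) (h2 : 2 ≤ u.length) :
    ∃ c mid, u = [c] ++ mid ++ [c] ∧ mid.reverse = mid ∧ mid.length + 2 = u.length := by
  have hne : u ≠ [] := by intro h; rw [h] at h2; simp at h2
  obtain ⟨c, hc1, hc2⟩ := pal_last hu hne
  have hsuf : [c] <:+ u := by
    rw [hc1]; exact ⟨u.dropLast, rfl⟩
  obtain hdec := vdecomp h2 hc2 hsuf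
  set mid := (u.drop 1).dropLast with hmid
  refine ⟨c, mid, hdec, ?_, ?_⟩
  · have h3 : u.reverse = [c] ++ mid.reverse ++ [c] := by
      rw [hdec]; simp
    rw [hu, hdec] at h3
    have h4 : mid ++ [c] = mid.reverse ++ [c] := by
      have := h3
      simpa using this
    exact ((List.append_inj' h4 rfl).1).symm
  · rw [hdec]; simp

/-- rebuilding palindromes -/
lemma pal_sandwich {v mid : List A} {c : A} (h : v = [c] ++ mid ++ [c])
    (hm : mid.reverse = mid) : v.reverse = v := by
  rw [h]; simp [hm]


lemma pal_middle {v mid : List A} {c : A} (h : v = [c] ++ mid ++ [c])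
    (hv : v.reverse = v) : mid.reverse = mid := by
  have h3 : v.reverse = [c] ++ mid.reverse ++ [c] := by rw [h]; simp
  rw [hv, h] at h3
  have h4 : mid ++ [c] = mid.reverse ++ [c] := by simpa using h3
  exact ((List.append_inj' h4 rfl).1).symm

lemma pal_short {l : List A} (h : l.length ≤ 1) : l.reverse = l := by
  match l with
  | [] => rfl
  | [a] => rfl
  | a :: b :: t => simp at h

section CR

variable (w : ℕ → A)
variable (hstrict : ∀ n : ℕ, ∃ u : List A, u.length = n ∧ RightSpecial w u ∧
      (∀ v : List A, v.length = n → RightSpecial w v → v = u) ∧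
      ∀ a : A, IsFactorInf w (u ++ [a]))
variable (hrev : ∀ u : List A, IsFactorInf w u → IsFactorInf w u.reverse)
include hstrict hrev

/-- MAIN LEMMA: in a strict episturmian word, every factor which is a complete first
return to a palindromic factor is itself a palindrome. -/
theorem cfr_pal : ∀ (n : ℕ) (u v : List A), u.reverse = u → IsFactorInf w v →
    IsCompleteFirstReturn v u → v.length = n → v.reverse = v := by
  intro n
  induction n using Nat.strong_induction_on with
  | _ n IH =>
  intro u v hu hv hcfr hlen
  classical
  subst hlen
  -- case u = []
  by_cases hune : u = []
  · subst hune
    have hc := hcfr.2.2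
    rw [occCount_eq_ncard, occSet_nil] at hc
    rw [show Set.Iic v.length = ↑(Finset.Iic v.length) from by simp,
      Set.ncard_coe_finset, Nat.card_Iic] at hc
    obtain ⟨a, ha⟩ := List.length_eq_one_iff.1 (by omega : v.length = 1)
    rw [ha]; rfl
  have hfu : IsFactorInf w u := fc_of_pre hv hcfr.1
  obtain ⟨c, hudl, hupre⟩ := pal_last hu hune
  have hul : 1 ≤ u.length := List.length_pos_iff.2 hune
  have hle : u.length ≤ v.length := hcfr.1.length_le
  by_cases heqlen : v.length = u.length
  · rw [← List.IsPrefix.eq_of_length hcfr.1 heqlen.symm]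
    exact hu
  have hd : 1 ≤ v.length - u.length := by omega
  set d := v.length - u.length with hdd
  have hocc : occSet u v = {0, d} := cfr_occSet hcfr (by omega)
  have hoccm : ∀ t, SA v t u → t = 0 ∨ t = d := by
    intro t ht
    have ht2 : t ∈ occSet u v := ht
    rw [hocc] at ht2
    simpa using ht2
  have hv2 : 2 ≤ v.length := by omega
  have husufu : [c] <:+ u := ⟨u.dropLast, hudl.symm⟩
  have hvpre : [c] <+: v := hupre.trans hcfr.1
  have hvsuf : [c] <:+ v := husufu.trans hcfr.2.1
  -- dichotomy: either u.dropLast is the right special factor of length |u| - 1, or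
  -- |u| ≥ 3 and the central factor q of u is not right special.
  have hdicho : u.dropLast = theRS w hstrict (u.length - 1) ∨
      (3 ≤ u.length ∧ ∃ q : List A, u = [c] ++ q ++ [c] ∧ q.reverse = q ∧
        q.length + 2 = u.length ∧ ¬ RightSpecial w q) := by
    rcases Nat.lt_or_ge u.length 2 with hu1 | hu2
    · left
      have : u.dropLast.length = 0 := by simp; omega
      rw [List.length_eq_zero_iff.1 this, ← theRS_zero w hstrict]
      congr 1
      omega
    · obtain ⟨c₀, q, hudec, hqpal, hqlen⟩ := palDecomp hu hu2
      have hc₀ : c₀ = c := by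
        have h1 : u.dropLast = [c₀] ++ q := by rw [hudec, List.dropLast_concat]
        have h2 : u.dropLast ++ [c₀] = u.dropLast ++ [c] := by
          rw [← hudl]
          conv_lhs => rw [h1]
          rw [hudec]
        simpa using (List.append_inj h2 rfl).2
      subst hc₀
      by_cases hqrs : RightSpecial w q
      · left
        obtain ⟨c', hc', hii⟩ := apaRS w hstrict hrev hqpal hqrs
        have hfcu : IsFactorInf w ([c₀] ++ q ++ [c₀]) := by rw [← hudec]; exact hfu
        have hc'c : c₀ = c' := by rcases hii c₀ c₀ hfcu with h | h <;> exact h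
        have h1 : u.dropLast = [c₀] ++ q := by
          rw [hudec, List.dropLast_concat]
        rw [h1, show u.length - 1 = q.length + 1 from by omega, hc', hc'c]
        rfl
      · right
        refine ⟨?_, q, hudec, hqpal, hqlen, hqrs⟩
        -- if q = [] then q is right special (the empty word is)
        by_contra hcon
        have hq0 : q.length = 0 := by omega
        apply hqrs
        rw [List.length_eq_zero_iff.1 hq0, ← theRS_zero w hstrict]
        exact theRS_rs w hstrict 0
  rcases hdicho with HA | ⟨hu3, q, hudec, hqpal, hqlen, hqns⟩
  · -- CASE A
    by_cases hvv : v.reverse = v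
    · exact hvv
    -- longest common prefix of v and v.reverse
    set P : ℕ → Prop := fun j => v.take j = v.reverse.take j with hP
    have hP0 : P 0 := by simp [hP]
    set m := Nat.findGreatest P v.length with hm
    have hPm : P m := Nat.findGreatest_spec (Nat.zero_le _) hP0
    have hmle : m ≤ v.length := Nat.findGreatest_le _
    have hgreat : ∀ j, m < j → j ≤ v.length → ¬ P j := fun j h1 h2 =>
      Nat.findGreatest_is_greatest h1 h2
    have hmne : m ≠ v.length := by
      intro h
      apply hvv
      have h2 := hPm
      rw [h] at h2
      simp only [hP, List.take_length] at h2
      rw [List.take_of_length_le (by simp)] at h2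
      exact h2.symm
    have hmu : u.length ≤ m := by
      apply Nat.le_findGreatest hle
      have h1 : v.take u.length = u := (List.prefix_iff_eq_take.1 hcfr.1).symm
      have h2 : v.reverse.take u.length = u := by
        have h3 : u <+: v.reverse := by
          obtain ⟨t, ht⟩ := hcfr.2.1
          exact ⟨t.reverse, by rw [← ht]; simp [hu]⟩
        exact (List.prefix_iff_eq_take.1 h3).symm
      rw [hP]
      simp only
      rw [h1, h2]
    have hm2 : m + 2 ≤ v.length := by
      by_contra hcon
      have hmeq : m = v.length - 1 := by omega
      apply hgreat v.length (by omega) (le_refl _)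
      obtain ⟨Zv, hZv⟩ := hvsuf
      have hZvlen : Zv.length = m := by
        have : v.length = Zv.length + 1 := by rw [← hZv]; simp
        omega
      have hvrsuf : [c] <:+ v.reverse := by
        have := (List.reverse_suffix (l₁ := [c]) (l₂ := v.reverse))
        obtain ⟨t, ht⟩ := hvpre
        exact ⟨t.reverse, by rw [← ht]; simp⟩
      obtain ⟨Z₂, hZ₂⟩ := hvrsuf
      have hZ₂len : Z₂.length = m := by
        have : v.reverse.length = Z₂.length + 1 := by rw [← hZ₂]; simp
        simp at this
        omega
      have htv : v.take m = Zv := by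
        rw [← hZv, ← hZvlen, List.take_left]
      have htvr : v.reverse.take m = Z₂ := by
        rw [← hZ₂, ← hZ₂len, List.take_left]
      have hZeq : Zv = Z₂ := by
        rw [← htv, ← htvr]; exact hPm
      show v.take v.length = v.reverse.take v.length
      rw [List.take_length, List.take_of_length_le (by simp), ← hZ₂, ← hZv, hZeq]
    set z := v.take m with hz
    have hzlen : z.length = m := by
      simp only [hz, List.length_take]
      omega
    have hmlt : m < v.length := by omega
    have hmltr : m < v.reverse.length := by simp; omega
    have ha : v.take (m+1) = z ++ [v[m]] := by
      rw [List.take_succ, List.getElem?_eq_getElem hmlt]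
      rfl
    have hb : v.reverse.take (m+1) = z ++ [v.reverse[m]] := by
      rw [List.take_succ, List.getElem?_eq_getElem hmltr, hz, hPm]
      rfl
    have habne : v[m] ≠ v.reverse[m] := by
      intro h
      apply hgreat (m+1) (by omega) (by omega)
      show v.take (m+1) = v.reverse.take (m+1)
      rw [ha, hb, h]
    have hrsz : RightSpecial w z :=
      ⟨v[m], v.reverse[m], habne,
        by rw [← ha]; exact fc_of_pre hv (List.take_prefix _ _),
        by rw [← hb]; exact fc_of_pre (hrev v hv) (List.take_prefix _ _)⟩
    have hzrs : z = theRS w hstrict m := by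
      have := theRS_uniq w hstrict hrsz
      rwa [hzlen] at this
    have huz : u <+: z := by
      rw [List.prefix_iff_eq_take.1 hcfr.1, hz]
      have : v.take u.length = (v.take m).take u.length := by
        rw [List.take_take, min_eq_left hmu]
      rw [this]
      exact List.take_prefix _ _
    have hzsuf : u.dropLast <:+ z := by
      have h1 : z.drop (m - (u.length - 1)) <:+ z := List.drop_suffix _ _
      have h4 : z.drop (m - (u.length - 1)) <:+ theRS w hstrict m := by
        rw [← hzrs]; exact h1
      have h3 := theRS_suffix w hstrict (n := m) h4
      have h5 : (z.drop (m - (u.length - 1))).length = u.length - 1 := by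
        simp only [List.length_drop, hzlen]; omega
      rw [h5] at h3
      rw [HA, ← h3]
      exact h1
    -- subcase m = 1 vs m ≥ 2
    rcases Nat.lt_or_ge m 2 with hmlt2 | hm2'
    · -- m = 1, u = [c]
      have hmeq : m = 1 := by omega
      have huleq : u.length = 1 := by omega
      have huc : u = [c] := by
        have h0 : u.dropLast = [] := List.length_eq_zero_iff.1 (by simp; omega)
        conv_lhs => rw [hudl, h0]
        rfl
      have hzc : z = [c] := by
        rw [← huc]
        exact (List.IsPrefix.eq_of_length huz (by rw [hzlen]; omega)).symm
      have hrsc : RightSpecial w ([] : List A) := by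
        rw [← theRS_zero w hstrict]; exact theRS_rs w hstrict 0
      obtain ⟨c', hc', hii⟩ := apaRS w hstrict hrev (p := ([] : List A)) rfl hrsc
      simp only [List.length_nil, Nat.zero_add] at hc'
      have hc'c : c' = c := by
        have h1 : z = theRS w hstrict 1 := by rw [hzrs, hmeq]
        rw [hc', hzc] at h1
        exact (List.head_eq_of_cons_eq h1.symm)
      simp only [hc'c] at hii
      rcases Nat.lt_or_ge v.length 4 with hsmall | hbig
      · have hvdec := vdecomp hv2 hvpre hvsuf
        apply pal_sandwich hvdec
        apply pal_short
        have : v.length = ((v.drop 1).dropLast).length + 2 := by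
          conv_lhs => rw [hvdec]
          simp
        omega
      · exfalso
        have hne1 : (1:ℕ) < v.length := by omega
        have hne2 : (2:ℕ) < v.length := by omega
        have hletter : ∀ j, (hj : j < v.length) → v[j] = c → j = 0 ∨ j = d := by
          intro j hj hje
          apply hoccm
          have := sa_getElem hj
          rwa [hje, ← huc] at this
        have hsa12 : SA v 1 ([v[1]] ++ [] ++ [v[2]]) := by
          refine ⟨v.take 1, v.drop 3, ?_, by simp only [List.length_take]; omega⟩
          conv_lhs => rw [← List.take_append_drop 1 v]
          rw [List.drop_eq_getElem_cons hne1, List.drop_eq_getElem_cons hne2]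
          simp
        have hdge : 3 ≤ d := by omega
        rcases hii v[1] v[2] (fc_of_sa hv hsa12) with h | h
        · rcases hletter 1 hne1 h with h2 | h2 <;> omega
        · rcases hletter 2 hne2 h with h2 | h2 <;> omega
    · -- m ≥ 2
      have hfzc : IsFactorInf w (z ++ [c]) := by
        rw [hzrs]
        exact theRS_ext w hstrict m c
      have huzc : u <:+ z ++ [c] := by
        obtain ⟨s, hs⟩ := hzsuf
        exact ⟨s, by rw [hudl, ← List.append_assoc, hs]⟩
      have hzcl : (z ++ [c]).length = m + 1 := by simp [hzlen]
      have hozc : occSet u (z ++ [c]) = {0, (z ++ [c]).length - u.length} := by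
        ext t
        simp only [occSet, Set.mem_setOf_eq, Set.mem_insert_iff, Set.mem_singleton_iff, hzcl]
        constructor
        · intro ht
          have hb := ht.length_le
          rw [hzcl] at hb
          rcases Nat.lt_or_ge (t + u.length) (m+1) with hlt | hge
          · have h1 : SA z t u := sa_append_single ht (by omega)
            have h2 : SA v t u := by
              have h3 := (sa_zero_iff.2 (List.take_prefix m v)).trans h1
              simpa using h3
            rcases hoccm t h2 with rfl | rfl
            · left; rfl
            · exfalso
              have h3 := h1.length_le
              rw [hzlen] at h3
              omega
          · right; omega
        · intro ht
          rcases ht with rfl | rfl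
          · exact sa_zero_iff.2 (huz.trans ⟨[c], rfl⟩)
          · have h4 := sa_suffix huzc
            rwa [hzcl] at h4
      have hcfrzc : IsCompleteFirstReturn (z ++ [c]) u :=
        cfr_of_occSet hozc (by rw [hzcl]; omega)
      have hzcpal : (z ++ [c]).reverse = z ++ [c] :=
        IH (z ++ [c]).length (by rw [hzcl]; omega) u _ hu hfzc hcfrzc rfl
      obtain ⟨r, hr⟩ := huz
      obtain ⟨ut, hut⟩ := hupre
      set ρ := ut ++ r with hρ
      have hzρ : z = [c] ++ ρ := by rw [← hr, ← hut]; simp [hρ]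
      have hρlen : ρ.length + 1 = m := by
        have h5 : z.length = ρ.length + 1 := by rw [hzρ]; simp
        omega
      have hzcdec : z ++ [c] = [c] ++ ρ ++ [c] := by rw [hzρ]
      have hρpal : ρ.reverse = ρ := pal_middle hzcdec hzcpal
      have hρrs : RightSpecial w ρ := by
        apply rs_suffix w hrsz
        rw [hzρ]
        exact ⟨[c], rfl⟩
      obtain ⟨c', hc', hii⟩ := apaRS w hstrict hrev hρpal hρrs
      have hc'c : c' = c := by
        have h1 : theRS w hstrict (ρ.length + 1) = [c] ++ ρ := by
          rw [hρlen, ← hzrs, hzρ]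
        rw [hc'] at h1
        exact List.head_eq_of_cons_eq h1
      rw [hc'c] at hii
      have hvdec := vdecomp hv2 hvpre hvsuf
      set v' := (v.drop 1).dropLast with hv'
      have hvlen : v.length = v'.length + 2 := by
        conv_lhs => rw [hvdec]
        simp
      have hzrev : z.reverse = ρ ++ [c] := by rw [hzρ]; simp [hρpal]
      have hρv1 : SA v 1 ρ := by
        have h1 : SA z 1 ρ := ⟨[c], [], by simpa using hzρ, rfl⟩
        have h2 := (sa_zero_iff.2 (List.take_prefix m v)).trans h1
        simpa using h2
      have hzrsufv : z.reverse <:+ v := by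
        have h1 : z <+: v.reverse := by
          have h1b : v.reverse.take m <+: v.reverse := List.take_prefix _ _
          have h1c : v.reverse.take m = z := by rw [hz]; exact hPm.symm
          rwa [h1c] at h1b
        obtain ⟨t, htt⟩ := h1
        exact ⟨t.reverse, by rw [← List.reverse_reverse v, ← htt]; simp⟩
      have hρvD : SA v (v.length - m) ρ := by
        have h0 := sa_suffix hzrsufv
        have h1 : v.length - z.reverse.length = v.length - m := by simp [hzlen]
        rw [h1, hzrev] at h0
        exact h0.of_prefix ⟨[c], rfl⟩
      have husρc : u <:+ ρ ++ [c] := by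
        rw [← hzrev]
        exact ⟨r.reverse, by rw [← hr]; simp [hu]⟩
      set D := v.length - m - 1 with hD
      have hov' : occSet ρ v' = {0, D} := by
        ext t
        simp only [occSet, Set.mem_setOf_eq, Set.mem_insert_iff, Set.mem_singleton_iff]
        constructor
        · intro ht
          have hbd := ht.length_le
          have htv : SA v (t+1) ρ := ((sa_middle hvdec).1 ht).1
          obtain ⟨e, f, hef⟩ := sa_both_letters htv (by omega) (by omega)
          rw [show t + 1 - 1 = t from rfl] at hef
          rcases hii e f (fc_of_sa hv hef) with he | hf
          · rw [he] at hef
            have hsz : SA v t z := by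
              rw [hzρ]
              exact hef.of_prefix ⟨[f], by simp⟩
            have hsu : SA v t u := hsz.of_prefix ⟨r, hr⟩
            rcases hoccm t hsu with rfl | rfl
            · left; rfl
            · exfalso
              have h1 := hsz.length_le
              rw [hzlen] at h1
              omega
          · rw [hf] at hef
            have h2 : SA v (t + 1) (ρ ++ [c]) := by
              have h3 := hef.trans
                (show SA ([e] ++ ρ ++ [c]) 1 (ρ ++ [c]) from ⟨[e], [], by simp, rfl⟩)
              simpa using h3
            have h4 := h2.of_suffix husρc
            have h5 : (ρ ++ [c]).length = m := by simp; omega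
            rw [h5] at h4
            rcases hoccm _ h4 with h6 | h6
            · exfalso; omega
            · right; omega
        · intro ht
          rcases ht with rfl | rfl
          · apply (sa_middle hvdec).2
            refine ⟨?_, by omega⟩
            simpa using hρv1
          · apply (sa_middle hvdec).2
            refine ⟨?_, by omega⟩
            have h7 : D + 1 = v.length - m := by omega
            rw [h7]
            exact hρvD
      have hD' : v'.length - ρ.length = D := by omega
      have hcfrv' : IsCompleteFirstReturn v' ρ := by
        apply cfr_of_occSet
        · rw [hov', hD']
        · omega
      have hfv' : IsFactorInf w v' := fc_of_sa hv ⟨[c], [c], hvdec, rfl⟩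
      have hpalv' : v'.reverse = v' := IH v'.length (by omega) ρ v' hρpal hfv' hcfrv' rfl
      exact pal_sandwich hvdec hpalv'
  · -- CASE B
    have hvdec := vdecomp hv2 hvpre hvsuf
    set v' := (v.drop 1).dropLast with hv'
    have hvlen : v.length = v'.length + 2 := by
      conv_lhs => rw [hvdec]
      simp
    have hqsufu : q ++ [c] <:+ u := ⟨[c], by rw [hudec]; simp⟩
    have hfqc : IsFactorInf w (q ++ [c]) := fc_of_suf hfu hqsufu
    have hqer : ∀ e f, IsFactorInf w ([e] ++ q ++ [f]) → e = c ∧ f = c := by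
      intro e f hef
      have hfeq : f = c := by
        apply unique_ext w hqns (fc_of_suf hef ⟨[e], by simp⟩) hfqc
      have heeq : e = c := by
        apply unique_ext w hqns ?_ hfqc
        have h1 : IsFactorInf w ([e] ++ q) := fc_of_pre hef ⟨[f], by simp⟩
        have h2 := hrev _ h1
        have h3 : ([e] ++ q).reverse = q ++ [e] := by simp [hqpal]
        rwa [h3] at h2
      exact ⟨heeq, hfeq⟩
    have hov' : occSet q v' = {0, d} := by
      ext t
      simp only [occSet, Set.mem_setOf_eq, Set.mem_insert_iff, Set.mem_singleton_iff]
      constructor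
      · intro ht
        have hbd := ht.length_le
        have htv : SA v (t+1) q := ((sa_middle hvdec).1 ht).1
        obtain ⟨e, f, hef⟩ := sa_both_letters htv (by omega) (by omega)
        rw [show t + 1 - 1 = t from rfl] at hef
        obtain ⟨heeq, hfeq⟩ := hqer e f (fc_of_sa hv hef)
        rw [heeq, hfeq, ← hudec] at hef
        exact hoccm t hef
      · intro ht
        have hsau1 : SA u 1 q := ⟨[c], [c], hudec, rfl⟩
        rcases ht with rfl | rfl
        · apply (sa_middle hvdec).2
          refine ⟨?_, by omega⟩
          have h1 := (sa_zero_iff.2 hcfr.1).trans hsau1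
          simpa using h1
        · apply (sa_middle hvdec).2
          refine ⟨?_, by omega⟩
          have h2 : SA v d u := by
            have h3 := sa_suffix hcfr.2.1
            rwa [← hdd] at h3
          exact h2.trans hsau1
    have hD' : v'.length - q.length = d := by omega
    have hcfrv' : IsCompleteFirstReturn v' q := by
      apply cfr_of_occSet
      · rw [hov', hD']
      · omega
    have hfv' : IsFactorInf w v' := fc_of_sa hv ⟨[c], [c], hvdec, rfl⟩
    have hpalv' : v'.reverse = v' := IH v'.length (by omega) q v' hqpal hfv' hcfrv' rfl
    exact pal_sandwich hvdec hpalv'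


/-- privileged factors are palindromes -/
lemma priv_imp_pal : ∀ v : List A, Privileged v → IsFactorInf w v → v.reverse = v := by
  intro v hp
  induction hp with
  | nil => intro _; rfl
  | single a => intro _; rfl
  | ret x u h2 hlt hpu hcfr IH =>
    intro hx
    have hfu : IsFactorInf w u := fc_of_pre hx hcfr.1
    exact cfr_pal w hstrict hrev x.length u x (IH hfu) hx hcfr rfl

/-- palindromic factors are privileged -/
lemma pal_imp_priv : ∀ (n : ℕ) (p : List A), p.length = n → IsFactorInf w p →
    p.reverse = p → Privileged p := by
  intro n
  induction n using Nat.strong_induction_on with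
  | _ n IH =>
  intro p hlen hfp hpal
  classical
  rcases Nat.lt_or_ge n 2 with hn2 | hn2
  · rcases n with _ | n
    · rw [List.length_eq_zero_iff.1 hlen]; exact Privileged.nil
    · have hn0 : n = 0 := by omega
      subst hn0
      obtain ⟨a, ha⟩ := List.length_eq_one_iff.1 hlen
      rw [ha]; exact Privileged.single a
  · subst hlen
    set PP : ℕ → Prop := fun j => (p.take j).reverse = p.take j with hPP
    have hPP1 : PP 1 := by
      obtain ⟨a, t, hat⟩ := List.exists_cons_of_ne_nil
        (show p ≠ [] by intro h; rw [h] at hn2; simp at hn2)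
      show (p.take 1).reverse = p.take 1
      rw [hat]
      simp
    set b := Nat.findGreatest PP (p.length - 1) with hb
    have hb1 : 1 ≤ b := Nat.le_findGreatest (by omega) hPP1
    have hble : b ≤ p.length - 1 := Nat.findGreatest_le _
    have hPb : PP b := Nat.findGreatest_spec (Nat.zero_le _) (by show (p.take 0).reverse = p.take 0; simp)
    have hmax : ∀ j, b < j → j ≤ p.length - 1 → ¬ PP j := by
      intro j h1 h2
      rw [hb] at h1
      exact Nat.findGreatest_is_greatest h1 h2
    clear_value b
    set q := p.take b with hq
    have hqlen : q.length = b := by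
      simp only [hq, List.length_take]
      omega
    have hqpal : q.reverse = q := hPb
    have hqpre : q <+: p := List.take_prefix _ _
    have hqsuf : q <:+ p := by
      have h1 : q.reverse <+: p.reverse := by rw [hqpal, hpal]; exact hqpre
      exact (List.reverse_prefix).1 h1
    have hocc : ∀ t, SA p t q → t = 0 ∨ t = p.length - b := by
      intro t ht
      by_contra hcon
      push_neg at hcon
      obtain ⟨ht0, htd⟩ := hcon
      have htpos : 0 < t := Nat.pos_of_ne_zero ht0
      have htle : t + b ≤ p.length := by
        have h2 := ht.length_le
        rwa [hqlen] at h2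
      have htlt : t < p.length - b := by omega
      have hex : ∃ s, 0 < s ∧ SA p s q := ⟨t, htpos, ht⟩
      set t₀ := Nat.find hex with ht₀
      have ht₀spec := Nat.find_spec hex
      rw [← ht₀] at ht₀spec
      obtain ⟨ht₀pos, ht₀occ⟩ := ht₀spec
      have ht₀le : t₀ ≤ t := by rw [ht₀]; exact Nat.find_min' hex ⟨htpos, ht⟩
      have ht₀min : ∀ s, s < t₀ → ¬ (0 < s ∧ SA p s q) := by
        intro s hs
        rw [ht₀] at hs
        exact Nat.find_min hex hs
      clear_value t₀
      set r := p.take (t₀ + b) with hr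
      have hrlen : r.length = t₀ + b := by
        simp only [hr, List.length_take]
        omega
      have hqr : q = r.take b := by
        rw [hq, hr, List.take_take, min_eq_left (by omega)]
      have hrocc : occSet q r = {0, t₀} := by
        ext s
        simp only [occSet, Set.mem_setOf_eq, Set.mem_insert_iff, Set.mem_singleton_iff]
        constructor
        · intro hs
          have hs2 : SA p s q := hs.of_take
          have hsb := hs.length_le
          rw [hqlen, hrlen] at hsb
          rcases Nat.eq_zero_or_pos s with rfl | hspos
          · left; rfl
          · right
            by_contra hne
            exact ht₀min s (by omega) ⟨hspos, hs2⟩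
        · intro hs
          rcases hs with rfl | rfl
          · apply sa_zero_iff.2
            rw [hqr]
            exact List.take_prefix _ _
          · exact sa_take ht₀occ (by rw [hqlen])
      have hrcfr : IsCompleteFirstReturn r q := by
        apply cfr_of_occSet
        · rw [hrocc]
          have h3 : r.length - q.length = t₀ := by rw [hrlen, hqlen]; omega
          rw [h3]
        · rw [hrlen, hqlen]; omega
      have hrf : IsFactorInf w r := fc_of_pre hfp (List.take_prefix _ _)
      have hrpal : r.reverse = r := cfr_pal w hstrict hrev r.length q r hqpal hrf hrcfr rfl
      have hng : ¬ PP (t₀ + b) := hmax _ (by omega) (by omega)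
      exact hng hrpal
    have hoccset : occSet q p = {0, p.length - b} := by
      ext s
      simp only [occSet, Set.mem_setOf_eq, Set.mem_insert_iff, Set.mem_singleton_iff]
      constructor
      · exact hocc s
      · intro hs
        rcases hs with rfl | rfl
        · exact sa_zero_iff.2 hqpre
        · have h4 := sa_suffix hqsuf
          rwa [hqlen] at h4
    have hpcfr : IsCompleteFirstReturn p q := by
      apply cfr_of_occSet
      · rw [hoccset, hqlen]
      · rw [hqlen]; omega
    have hqpriv : Privileged q := IH b (by omega) q hqlen (fc_of_pre hfp hqpre) hqpal
    exact Privileged.ret p q (by omega) (by rw [hqlen]; omega) hqpriv hpcfr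

end CR

section Count

variable [Nonempty A] (w : ℕ → A)

open scoped Classical in
/-- the unique two-sided palindromic extension letter -/
noncomputable def extL (p : List A) : A :=
  if h : ∃ a, IsFactorInf w ([a] ++ p ++ [a]) then h.choose else Classical.arbitrary A

lemma extL_spec {p : List A} (h : ∃ a, IsFactorInf w ([a] ++ p ++ [a])) :
    IsFactorInf w ([extL w p] ++ p ++ [extL w p]) := by
  rw [extL, dif_pos h]
  exact h.choose_spec

variable (hstrict : ∀ n : ℕ, ∃ u : List A, u.length = n ∧ RightSpecial w u ∧
      (∀ v : List A, v.length = n → RightSpecial w v → v = u) ∧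
      ∀ a : A, IsFactorInf w (u ++ [a]))
variable (hrev : ∀ u : List A, IsFactorInf w u → IsFactorInf w u.reverse)
include hstrict hrev

lemma palSet_step (n : ℕ) :
    {u : List A | IsFactorInf w u ∧ u.reverse = u ∧ u.length = n + 2} =
      (fun p => [extL w p] ++ p ++ [extL w p]) ''
        {u : List A | IsFactorInf w u ∧ u.reverse = u ∧ u.length = n} := by
  ext P
  simp only [Set.mem_image, Set.mem_setOf_eq]
  constructor
  · rintro ⟨hf, hpal, hlen⟩
    obtain ⟨c, mid, hdec, hmid, hmlen⟩ := palDecomp hpal (by omega)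
    have hmidf : IsFactorInf w mid := fc_of_sa hf ⟨[c], [c], hdec, rfl⟩
    refine ⟨mid, ⟨hmidf, hmid, by omega⟩, ?_⟩
    have hex : ∃ a, IsFactorInf w ([a] ++ mid ++ [a]) := ⟨c, by rw [← hdec]; exact hf⟩
    have h1 := extL_spec w hex
    have h2 : extL w mid = c :=
      apa_unique w hstrict hrev hmid h1 (by rw [← hdec]; exact hf)
    rw [h2, ← hdec]
  · rintro ⟨mid, ⟨hf, hmid, hlen⟩, rfl⟩
    have hex : ∃ a, IsFactorInf w ([a] ++ mid ++ [a]) :=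
      apa_exists w hstrict hrev hf hmid
    have h1 := extL_spec w hex
    refine ⟨h1, by simp [hmid], ?_⟩
    simp only [List.length_append, List.length_cons, List.length_nil]
    omega

lemma palCount [Fintype A] :
    ∀ n : ℕ, {u : List A | IsFactorInf w u ∧ u.reverse = u ∧ u.length = n}.ncard
      = if Even n then 1 else Fintype.card A := by
  intro n
  induction n using Nat.strong_induction_on with
  | _ n IH =>
  match n with
  | 0 =>
    have hset : {u : List A | IsFactorInf w u ∧ u.reverse = u ∧ u.length = 0}
        = {([] : List A)} := by
      ext u
      simp only [Set.mem_setOf_eq, Set.mem_singleton_iff, List.length_eq_zero_iff]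
      constructor
      · rintro ⟨_, _, h⟩; exact h
      · rintro rfl
        exact ⟨⟨0, by simp⟩, rfl, rfl⟩
    rw [hset]
    simp
  | 1 =>
    have hset : {u : List A | IsFactorInf w u ∧ u.reverse = u ∧ u.length = 1}
        = (fun a : A => [a]) '' Set.univ := by
      ext u
      simp only [Set.mem_setOf_eq, Set.mem_image, Set.mem_univ, true_and]
      constructor
      · rintro ⟨_, _, h⟩
        obtain ⟨a, rfl⟩ := List.length_eq_one_iff.1 h
        exact ⟨a, rfl⟩
      · rintro ⟨a, rfl⟩
        exact ⟨fc_letter w hstrict a, rfl, rfl⟩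
    rw [hset, Set.ncard_image_of_injOn (fun a _ b _ h => by simpa using h),
      Set.ncard_univ, Nat.card_eq_fintype_card]
    simp
  | (k+2) =>
    rw [palSet_step w hstrict hrev k]
    rw [Set.ncard_image_of_injOn ?inj]
    case inj =>
      rintro p ⟨_, _, hp⟩ p' ⟨_, _, hp'⟩ he
      simp only at he
      have h1 := List.append_inj' he rfl
      have h3 := List.append_inj h1.1 rfl
      exact h3.2
    rw [IH k (by omega)]
    have heven : Even (k + 2) ↔ Even k := by
      constructor
      · intro h; rcases h with ⟨j, hj⟩; exact ⟨j - 1, by omega⟩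
      · intro h; rcases h with ⟨j, hj⟩; exact ⟨j + 1, by omega⟩
    by_cases hk : Even k
    · rw [if_pos hk, if_pos (heven.2 hk)]
    · rw [if_neg hk, if_neg (fun h => hk (heven.1 h))]

end Count

end PrivEpi


/-- An `A`-strict episturmian word over a finite alphabet `A` with
`|A| ≥ 2` has privileged complexity 1 for even lengths and `|A|` for odd lengths. -/
theorem strict_episturmian_privileged_complexity {A : Type*} [Fintype A]
    (hA : 2 ≤ Fintype.card A) (w : ℕ → A)
    (hrev : ∀ u : List A, IsFactorInf w u → IsFactorInf w u.reverse)
    (hstrict : ∀ n : ℕ, ∃ u : List A, u.length = n ∧ RightSpecial w u ∧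
      (∀ v : List A, v.length = n → RightSpecial w v → v = u) ∧
      ∀ a : A, IsFactorInf w (u ++ [a])) :
    ∀ n : ℕ, privComplexityInf w n = if Even n then 1 else Fintype.card A := by
  haveI : Nonempty A := Fintype.card_pos_iff.mp (by omega)
  intro n
  unfold privComplexityInf
  have hsets : {u : List A | IsFactorInf w u ∧ Privileged u ∧ u.length = n}
      = {u : List A | IsFactorInf w u ∧ u.reverse = u ∧ u.length = n} := by
    ext u
    simp only [Set.mem_setOf_eq]
    constructor
    · rintro ⟨hf, hp, hl⟩
      exact ⟨hf, PrivEpi.priv_imp_pal w hstrict hrev u hp hf, hl⟩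
    · rintro ⟨hf, hp, hl⟩
      exact ⟨hf, PrivEpi.pal_imp_priv w hstrict hrev u.length u rfl hf hp, hl⟩
  rw [hsets]
  exact PrivEpi.palCount w hstrict hrev n
end

section
/- Let w be a nonempty privileged factor of the Thue-Morse word t of even length. Then 00 or 11 is a factor of w. -/
private lemma occCount_nil_eq' {A : Type*} (w : List A) : occCount [] w = w.length + 1 := by
  unfold occCount
  simp only [List.length_nil, List.take_zero, add_zero, and_true]
  have : {i : ℕ | i ≤ w.length} = ↑(Finset.Iic w.length) := by ext; simp
  rw [this, Set.ncard_coe_finset, Nat.card_Iic]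

private lemma privileged_head?_eq_getLast' {A : Type*} {w : List A} (h : Privileged w) :
    w.head? = w.getLast? := by
  induction h with
  | nil => rfl
  | single a => rfl
  | ret w u h2 hlt hu hcfr ih =>
    obtain ⟨⟨t, ht⟩, ⟨s, hs⟩, hocc⟩ := hcfr
    have hune : u ≠ [] := by
      rintro rfl
      rw [occCount_nil_eq'] at hocc
      omega
    have h1 : w.head? = u.head? := by
      rw [← ht]
      cases u with
      | nil => exact absurd rfl hune
      | cons a l => simp
    have h2' : w.getLast? = u.getLast? := by
      rw [← hs]
      exact List.getLast?_append_of_ne_nil _ hune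
    rw [h1, h2', ih]

/-- Every nonempty privileged factor of the Thue-Morse word of even length
contains `00` or `11` as a factor. -/
theorem thue_morse_even_privileged_contains_square (w : List Bool) (hne : w ≠ [])
    (hfac : IsFactorInf thueMorse w) (hpriv : Privileged w) (heven : Even w.length) :
    [false, false] <:+: w ∨ [true, true] <:+: w := by
  by_contra hcon
  push_neg at hcon
  obtain ⟨h00, h11⟩ := hcon
  have hlen0 : w.length ≠ 0 := by simpa using hne
  obtain ⟨k, hk⟩ := heven
  have hlen2 : 2 ≤ w.length := by omega
  have flip : ∀ i, i + 2 ≤ w.length → w.getD (i+1) false = ! (w.getD i false) := by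
    intro i hi
    have hi1 : i < w.length := by omega
    have hi2 : i + 1 < w.length := by omega
    have hd : w.drop i = w.getD i false :: w.getD (i+1) false :: w.drop (i+2) := by
      rw [List.drop_eq_getElem_cons hi1, List.drop_eq_getElem_cons hi2,
        List.getD_eq_getElem _ _ hi1, List.getD_eq_getElem _ _ hi2]
    have hinf : [w.getD i false, w.getD (i+1) false] <:+: w := by
      refine List.IsInfix.trans ?_ (w.drop_suffix i).isInfix
      refine (List.IsPrefix.isInfix ?_)
      exact ⟨w.drop (i+2), by rw [hd]; rfl⟩
    cases hwi : w.getD i false <;> cases hwi1 : w.getD (i+1) false <;>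
      rw [hwi, hwi1] at hinf <;> simp_all
  have alt : ∀ i, i < w.length →
      w.getD i false = if i % 2 = 0 then w.getD 0 false else ! (w.getD 0 false) := by
    intro i
    induction i with
    | zero => intro _; simp
    | succ n ih =>
      intro h
      have hn : n < w.length := by omega
      rw [flip n (by omega), ih hn]
      rcases Nat.mod_two_eq_zero_or_one n with h0 | h1
      · have h1' : (n+1) % 2 = 1 := by omega
        simp [h0, h1']
      · have h0' : (n+1) % 2 = 0 := by omega
        simp [h1, h0']
  have hhl := privileged_head?_eq_getLast' hpriv
  rw [List.head?_eq_getElem? (l := w), List.getLast?_eq_getElem? (l := w),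
    List.getElem?_eq_getElem (show 0 < w.length by omega),
    List.getElem?_eq_getElem (show w.length - 1 < w.length by omega)] at hhl
  have e0 : w.getD 0 false = w.getD (w.length - 1) false := by
    rw [List.getD_eq_getElem _ _ (show 0 < w.length by omega),
      List.getD_eq_getElem _ _ (show w.length - 1 < w.length by omega)]
    exact Option.some_injective _ hhl
  have hmod : (w.length - 1) % 2 = 1 := by omega
  have := alt (w.length - 1) (by omega)
  rw [hmod] at this
  simp only [if_neg (by omega : ¬ (1 : ℕ) = 0)] at this
  rw [this] at e0
  simp at e0
end

section
/- The Thue-Morse word t has no privileged factor of odd length n with n ≥ 5. -/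
/-! ### Auxiliary machinery for the proof -/

def seg (i m : ℕ) : List Bool := (List.range m).map fun k => thueMorse (i + k)

lemma seg_length (i m : ℕ) : (seg i m).length = m := by simp [seg]

lemma seg_getD (i m k : ℕ) (h : k < m) : (seg i m).getD k false = thueMorse (i + k) := by
  rw [List.getD_eq_getElem _ _ (by simpa [seg_length] using h)]
  simp [seg]

lemma seg_ext {u : List Bool} {i m : ℕ} (h1 : u.length = m)
    (h2 : ∀ k, k < m → u.getD k false = thueMorse (i + k)) : u = seg i m := by
  apply List.ext_getElem (by simp [seg_length, h1])
  intro k hk hk2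
  have h3 := h2 k (by omega)
  rw [List.getD_eq_getElem _ _ hk] at h3
  rw [h3]; simp [seg]

lemma seg_drop (i n j : ℕ) : (seg i n).drop j = seg (i + j) (n - j) := by
  apply List.ext_getElem (by simp [seg_length])
  intro k hk hk2
  simp only [seg, List.getElem_drop, List.getElem_map, List.getElem_range]
  congr 1; omega

lemma seg_take (i n j : ℕ) (h : j ≤ n) : (seg i n).take j = seg i j := by
  apply List.ext_getElem (by simp [seg_length]; omega)
  intro k hk hk2
  simp [seg]

lemma tm_even (n : ℕ) : thueMorse (2 * n) = thueMorse n := by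
  rcases Nat.eq_zero_or_pos n with rfl | hn
  · rfl
  · unfold thueMorse
    rw [Nat.digits_def' (by norm_num) (by omega)]
    simp [Nat.mul_div_cancel_left _ (by norm_num : (0:ℕ) < 2), Nat.mul_mod_right]

lemma tm_odd (n : ℕ) : thueMorse (2 * n + 1) = !thueMorse n := by
  unfold thueMorse
  rw [Nat.digits_def' (by norm_num) (by omega)]
  have h1 : (2 * n + 1) % 2 = 1 := by omega
  have h2 : (2 * n + 1) / 2 = n := by omega
  rw [h1, h2, List.count_cons]
  rcases Nat.mod_two_eq_zero_or_one ((Nat.digits 2 n).count 1) with h | h <;>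
    simp [Nat.add_mod, h]

lemma tm_ne (n : ℕ) : thueMorse (2 * n) ≠ thueMorse (2 * n + 1) := by
  rw [tm_even, tm_odd]; cases thueMorse n <;> simp

lemma tm_pair_odd {k : ℕ} (h : thueMorse k = thueMorse (k + 1)) : k % 2 = 1 := by
  rcases Nat.even_or_odd k with ⟨s, hs⟩ | ⟨s, hs⟩
  · exfalso
    have hne := tm_ne s
    have h2 : k = 2 * s := by omega
    rw [h2] at h
    exact hne h
  · omega

lemma tm_no_cube (k : ℕ) (h1 : thueMorse k = thueMorse (k + 1))
    (h2 : thueMorse (k + 1) = thueMorse (k + 2)) : False := by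
  have o1 := tm_pair_odd h1
  have o2 := tm_pair_odd h2
  omega

lemma tm_alt (s : ℕ) : ∀ l : ℕ, (∀ k, s ≤ k → k < s + l → thueMorse k ≠ thueMorse (k + 1)) →
    thueMorse (s + l) = if l % 2 = 0 then thueMorse s else !(thueMorse s) := by
  intro l
  induction l with
  | zero => intro _; simp
  | succ l ih =>
    intro h
    have h1 := ih (fun k hk hk2 => h k hk (by omega))
    have h2 := h (s + l) (by omega) (by omega)
    have h3 : thueMorse (s + l + 1) = !thueMorse (s + l) := by
      cases hb : thueMorse (s + l) <;> cases hb2 : thueMorse (s + l + 1) <;> simp_all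
    have h4 : s + (l + 1) = s + l + 1 := by omega
    rw [h4, h3, h1]
    rcases Nat.mod_two_eq_zero_or_one l with hl | hl <;> simp [hl, Nat.add_mod]

lemma aba_pair (r : ℕ) (a : Bool) (h0 : thueMorse r = a) (h1 : thueMorse (r+1) = !a)
    (h2 : thueMorse (r+2) = a) :
    thueMorse (r/2) = thueMorse (r/2+1) ∧ thueMorse (r/2) = (if r % 2 = 0 then a else !a) := by
  rcases Nat.even_or_odd r with ⟨s, hs⟩ | ⟨s, hs⟩
  · have hr : r = 2*s := by omega
    subst hr
    have hs2 : (2*s)/2 = s := by omega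
    have e1 : thueMorse s = a := by rw [← tm_even]; exact h0
    have e2 : thueMorse (s+1) = a := by
      rw [← tm_even, show 2*(s+1) = 2*s+2 from by ring]; exact h2
    rw [hs2]
    exact ⟨by rw [e1, e2], by rw [if_pos (by omega), e1]⟩
  · have hr : r = 2*s+1 := by omega
    subst hr
    have hs2 : (2*s+1)/2 = s := by omega
    have e1 : thueMorse s = !a := by
      have h := tm_odd s
      rw [h0] at h
      rw [h]; simp
    have e2 : thueMorse (s+1) = !a := by
      have h := tm_even (s+1)
      rw [show 2*(s+1) = 2*s+1+1 from by ring] at h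
      rw [← h]; exact h1
    rw [hs2]
    exact ⟨by rw [e1, e2], by rw [if_neg (by omega), e1]⟩

lemma occ_nil {A : Type*} (w : List A) : occCount ([] : List A) w = w.length + 1 := by
  unfold occCount
  have h : {i : ℕ | i + ([] : List A).length ≤ w.length ∧ (w.drop i).take ([] : List A).length = []}
      = ↑(Finset.range (w.length + 1)) := by
    ext j; simp [Nat.lt_succ_iff]
  rw [h, Set.ncard_coe_finset, Finset.card_range]

lemma priv_first_last {v : List Bool} (hp : Privileged v) (hne : v ≠ []) :
    v.getD 0 false = v.getD (v.length - 1) false := by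
  induction hp with
  | nil => exact absurd rfl hne
  | single a => simp
  | ret w u h2 hlt hpu hcfr ih =>
    have hune : u ≠ [] := by
      rintro rfl
      have hc := hcfr.2.2
      rw [occ_nil] at hc
      omega
    have hul : 0 < u.length := List.length_pos_iff.mpr hune
    obtain ⟨s, hs⟩ := hcfr.1
    obtain ⟨s', hs'⟩ := hcfr.2.1
    have h1 : w.getD 0 false = u.getD 0 false := by
      rw [← hs]; exact List.getD_append _ _ _ _ hul
    have h2' : w.getD (w.length - 1) false = u.getD (u.length - 1) false := by
      rw [← hs']
      have hl : (s' ++ u).length = s'.length + u.length := by simp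
      rw [hl, List.getD_append_right _ _ _ _ (by omega)]
      congr 1
      omega
    rw [h1, h2', ih hune]

lemma list_alt (u : List Bool) (h : ∀ j, j + 1 < u.length → u.getD j false ≠ u.getD (j + 1) false) :
    ∀ k, k < u.length → u.getD k false = if k % 2 = 0 then u.getD 0 false else !(u.getD 0 false) := by
  intro k
  induction k with
  | zero => intro _; simp
  | succ k ih =>
    intro hk
    have h1 := ih (by omega)
    have h2 := h k (by omega)
    rw [h1] at h2
    have h3 : u.getD (k + 1) false = !(if k % 2 = 0 then u.getD 0 false else !(u.getD 0 false)) := by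
      revert h2
      cases u.getD (k + 1) false <;>
        cases hif : (if k % 2 = 0 then u.getD 0 false else !(u.getD 0 false)) <;> simp_all
    rw [h3]
    rcases Nat.mod_two_eq_zero_or_one k with hl | hl <;> simp [hl, Nat.add_mod]

lemma exists_pair (u : List Bool) (hne : Even u.length) (hpos : 0 < u.length)
    (hfl : u.getD 0 false = u.getD (u.length - 1) false) :
    ∃ j, j + 1 < u.length ∧ u.getD j false = u.getD (j + 1) false := by
  by_contra hcon
  push_neg at hcon
  have halt := list_alt u hcon (u.length - 1) (by omega)
  have hodd : (u.length - 1) % 2 = 1 := by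
    obtain ⟨c, hc⟩ := hne; omega
  rw [hodd, if_neg (by omega)] at halt
  rw [hfl] at halt
  cases u.getD (u.length - 1) false <;> simp_all

lemma bool_resolve1 {x a : Bool} (h : ¬ x = !a) : x = a := by
  cases x <;> cases a <;> simp_all

lemma bool_resolve2 {x a : Bool} (h : ¬ x = a) : x = !a := by
  cases x <;> cases a <;> simp_all

lemma tm_aux : ∀ N : ℕ, ∀ w : List Bool, w.length < N → IsFactorInf thueMorse w →
    Privileged w → Odd w.length → w.length < 5 := by
  intro N
  induction N with
  | zero => intro w h _ _ _; omega
  | succ N ih =>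
    intro w hlt hfac hpriv hodd
    by_contra h5
    push_neg at h5
    obtain ⟨i, hw0⟩ := hfac
    have hw : w = seg i w.length := hw0
    clear hw0
    cases hpriv with
    | nil => simp at h5
    | single a => simp at h5
    | ret _ u h2 hmlt hpu hcfr =>
      obtain ⟨hpre, hsuf, hcount⟩ := hcfr
      -- u occurs as a prefix
      have hupre : u = seg i u.length := by
        have h := List.prefix_iff_eq_take.mp hpre
        rw [hw, seg_take i w.length u.length (by omega)] at h
        exact h
      -- u occurs as a suffix
      have husuf : u = seg (i + (w.length - u.length)) u.length := by
        have h := List.suffix_iff_eq_drop.mp hsuf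
        rw [hw, seg_length, seg_drop] at h
        rw [show w.length - (w.length - u.length) = u.length from by omega] at h
        exact h
      -- occurrence characterization
      have hocc : ∀ j : ℕ, j + u.length ≤ w.length → seg (i + j) u.length = u →
          j = 0 ∨ j = w.length - u.length := by
        intro j hj hseg
        unfold occCount at hcount
        obtain ⟨x, y, hxy, hset⟩ := Set.ncard_eq_two.mp hcount
        have hmem : ∀ z : ℕ, z + u.length ≤ w.length → (w.drop z).take u.length = u →
            z = x ∨ z = y := by
          intro z hz1 hz2
          have hz' : z ∈ {i : ℕ | i + u.length ≤ w.length ∧ (w.drop i).take u.length = u} :=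
            ⟨hz1, hz2⟩
          rw [hset] at hz'
          simpa using hz'
        have e0 : (w.drop 0).take u.length = u := by
          rw [List.drop_zero, hw, seg_take i w.length u.length (by omega)]
          exact hupre.symm
        have ee : (w.drop (w.length - u.length)).take u.length = u := by
          rw [hw, seg_length, seg_drop, seg_take _ _ _ (by omega)]
          exact husuf.symm
        have ej : (w.drop j).take u.length = u := by
          rw [hw, seg_drop, seg_take _ _ _ (by omega)]
          exact hseg
        have m0 := hmem 0 (by omega) e0
        have me := hmem (w.length - u.length) (by omega) ee
        have mj := hmem j hj ej
        rcases m0 with h0 | h0 <;> rcases me with he | he <;> rcases mj with hj' | hj' <;> omega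
      -- pointwise values of u
      have hu1 : ∀ k, k < u.length → u.getD k false = thueMorse (i + k) := by
        intro k hk
        conv_lhs => rw [hupre]
        exact seg_getD _ _ _ hk
      have hu2 : ∀ k, k < u.length →
          u.getD k false = thueMorse (i + (w.length - u.length) + k) := by
        intro k hk
        conv_lhs => rw [husuf]
        exact seg_getD _ _ _ hk
      rcases Nat.even_or_odd u.length with hme | hmo
      · -- u has even length
        by_cases hm0 : u.length = 0
        · have hnil : u = [] := List.length_eq_zero_iff.mp hm0
          rw [hnil, occ_nil] at hcount
          omega
        · have hfl := priv_first_last hpu (by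
            intro hc
            apply hm0
            rw [hc]
            rfl)
          obtain ⟨j, hj1, hj2⟩ := exists_pair u hme (by omega) hfl
          have a1 := hu1 j (by omega)
          have a2 := hu1 (j+1) (by omega)
          rw [show i + (j+1) = i + j + 1 from by omega] at a2
          have p1 : thueMorse (i + j) = thueMorse (i + j + 1) := by
            rw [← a1, ← a2]; exact hj2
          have b1 := hu2 j (by omega)
          have b2 := hu2 (j+1) (by omega)
          rw [show i + (w.length - u.length) + (j+1) = i + (w.length - u.length) + j + 1
            from by omega] at b2
          have p2 : thueMorse (i + (w.length - u.length) + j)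
              = thueMorse (i + (w.length - u.length) + j + 1) := by
            rw [← b1, ← b2]; exact hj2
          have o1 := tm_pair_odd p1
          have o2 := tm_pair_odd p2
          have hno : w.length % 2 = 1 := Nat.odd_iff.mp hodd
          obtain ⟨c, hc⟩ := hme
          omega
      · -- u has odd length; by induction u.length < 5, hence 1 or 3
        have hu5 : u.length < 5 := ih u (by omega) ⟨i, hupre⟩ hpu hmo
        have hno : w.length % 2 = 1 := Nat.odd_iff.mp hodd
        have hm13 : u.length = 1 ∨ u.length = 3 := by
          have := Nat.odd_iff.mp hmo; omega
        rcases hm13 with hm1 | hm3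
        · -- u = [a]
          obtain ⟨a, ha⟩ := List.length_eq_one_iff.mp hm1
          have hta : ∀ j, 1 ≤ j → j ≤ 3 → thueMorse (i + j) = !a := by
            intro j hja hjb
            by_contra hcc
            have haj : thueMorse (i + j) = a := bool_resolve1 hcc
            have hseg : seg (i + j) u.length = u := by
              rw [ha]
              refine (seg_ext (by simp) ?_).symm
              intro k hk
              have hk0 : k = 0 := by simp at hk; omega
              subst hk0
              simpa using haj.symm
            have := hocc j (by omega) hseg
            omega
          have t1 := hta 1 (by omega) (by omega)
          have t2 := hta 2 (by omega) (by omega)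
          have t3 := hta 3 (by omega) (by omega)
          refine tm_no_cube (i+1) ?_ ?_
          · rw [show i+1+1 = i+2 from by omega, t1, t2]
          · rw [show i+1+1 = i+2 from by omega, show i+1+2 = i+3 from by omega, t2, t3]
        · -- u = [a, b, a]
          obtain ⟨a, b, c, habc⟩ := List.length_eq_three.mp hm3
          have hfl := priv_first_last hpu (by rw [habc]; simp)
          have hca : c = a := by
            rw [habc] at hfl
            simp at hfl
            exact hfl.symm
          rw [hca] at habc
          have ta0 : thueMorse i = a := by
            have h := hu1 0 (by omega)
            rw [habc] at h
            simpa using h.symm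
          have ta1 : thueMorse (i+1) = b := by
            have h := hu1 1 (by omega)
            rw [habc] at h
            simpa using h.symm
          have ta2 : thueMorse (i+2) = a := by
            have h := hu1 2 (by omega)
            rw [habc] at h
            simpa using h.symm
          have tb0 : thueMorse (i + (w.length - 3)) = a := by
            have h := hu2 0 (by omega)
            rw [hm3, habc] at h
            simpa using h.symm
          have tb1 : thueMorse (i + (w.length - 3) + 1) = b := by
            have h := hu2 1 (by omega)
            rw [hm3, habc] at h
            simpa using h.symm
          have tb2 : thueMorse (i + (w.length - 3) + 2) = a := by
            have h := hu2 2 (by omega)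
            rw [hm3, habc] at h
            simpa using h.symm
          by_cases hba : b = a
          · exact tm_no_cube i (by rw [ta0, ta1, hba]) (by rw [ta1, ta2, hba])
          · have hbna : b = !a := bool_resolve2 hba
            rw [hbna] at ta1 tb1 habc
            have he2 : 2 ≤ w.length - 3 := by omega
            have heev : (w.length - 3) % 2 = 0 := by omega
            obtain ⟨hp1, hp2⟩ := aba_pair i a ta0 ta1 ta2
            obtain ⟨hq1, hq2⟩ := aba_pair (i + (w.length - 3)) a tb0 tb1 tb2
            rw [show (i + (w.length - 3)) % 2 = i % 2 from by omega] at hq2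
            have hq2' : thueMorse ((i + (w.length - 3))/2) = thueMorse (i/2) := by
              rw [hq2, ← hp2]
            have hop : (i/2) % 2 = 1 := tm_pair_odd hp1
            have hoq : ((i + (w.length - 3))/2) % 2 = 1 := tm_pair_odd hq1
            have hqd : (i + (w.length - 3))/2 = i/2 + (w.length - 3)/2 := by omega
            have hdev : ((w.length - 3)/2) % 2 = 0 := by omega
            have hd1 : 1 ≤ (w.length - 3)/2 := by omega
            have halt : ∀ k, i/2 + 1 ≤ k → k < i/2 + 1 + ((w.length - 3)/2 - 1) →
                thueMorse k ≠ thueMorse (k+1) := by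
              intro k hk1 hk2 heq
              rcases (by cases thueMorse k <;> cases a <;> simp :
                  thueMorse k = a ∨ thueMorse k = !a) with hc | hc
              · have o0 : thueMorse (2*k) = a := by rw [tm_even]; exact hc
                have o1 : thueMorse (2*k+1) = !a := by rw [tm_odd, hc]
                have o2 : thueMorse (2*k+2) = a := by
                  rw [show 2*k+2 = 2*(k+1) from by ring, tm_even, ← heq]; exact hc
                have hseg : seg (i + (2*k - i)) u.length = u := by
                  rw [show i + (2*k - i) = 2*k from by omega, habc]
                  refine (seg_ext (by simp) ?_).symm
                  intro k' hk'
                  have : k' = 0 ∨ k' = 1 ∨ k' = 2 := by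
                    simp at hk'; omega
                  rcases this with rfl | rfl | rfl
                  · simpa using o0.symm
                  · simpa using o1.symm
                  · simpa using o2.symm
                have hj := hocc (2*k - i) (by omega) hseg
                omega
              · have o0 : thueMorse (2*k+1) = a := by rw [tm_odd, hc, Bool.not_not]
                have o1 : thueMorse (2*k+1+1) = !a := by
                  rw [show 2*k+1+1 = 2*(k+1) from by ring, tm_even, ← heq]; exact hc
                have o2 : thueMorse (2*k+1+2) = a := by
                  rw [show 2*k+1+2 = 2*(k+1)+1 from by ring, tm_odd, ← heq, hc, Bool.not_not]
                have hseg : seg (i + (2*k+1 - i)) u.length = u := by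
                  rw [show i + (2*k+1 - i) = 2*k+1 from by omega, habc]
                  refine (seg_ext (by simp) ?_).symm
                  intro k' hk'
                  have : k' = 0 ∨ k' = 1 ∨ k' = 2 := by
                    simp at hk'; omega
                  rcases this with rfl | rfl | rfl
                  · simpa using o0.symm
                  · simpa using o1.symm
                  · simpa using o2.symm
                have hj := hocc (2*k+1 - i) (by omega) hseg
                omega
            have hfin := tm_alt (i/2 + 1) ((w.length - 3)/2 - 1) halt
            rw [if_neg (by omega)] at hfin
            rw [show i/2 + 1 + ((w.length - 3)/2 - 1) = i/2 + (w.length - 3)/2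
              from by omega, ← hqd] at hfin
            rw [hq2', hp1] at hfin
            simp at hfin

/-- The Thue-Morse word has no privileged factor of odd length `n ≥ 5`. -/
theorem thue_morse_no_long_odd_privileged (w : List Bool)
    (hfac : IsFactorInf thueMorse w) (hpriv : Privileged w) (hodd : Odd w.length) :
    w.length < 5 :=
  tm_aux (w.length + 1) w (Nat.lt_succ_self _) hfac hpriv hodd
end
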